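/- arXiv:1412.4814 — 5 statements merged into one kernel-verified Lean document; each statement's English description precedes it below -/
import Mathlib

section
/- Let G be a compact connected topological group with normalized Haar measure μ, A ⊆ G measurable, and k ≥ 2 an integer. Then there exist g₁, …, g_k ∈ G such that μ(⋂_{i=1}^k A g_i) = μ(A)^k. -/
open MeasureTheory
open scoped ENNReal

section Aux

open scoped Pointwise
set_option linter.unusedSectionVars false


variable {G : Type*} [Group G] [TopologicalSpace G]
    [IsTopologicalGroup G] [CompactSpace G]
    [MeasurableSpace G] [BorelSpace G]
    (μ : Measure G) [μ.IsHaarMeasure] [IsProbabilityMeasure μ]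

theorem myRightInv : μ.IsMulRightInvariant := by
  constructor
  intro g
  have h1 : IsProbabilityMeasure (μ.map (· * g)) :=
    Measure.isProbabilityMeasure_map (measurable_mul_const g).aemeasurable
  exact Measure.isHaarMeasure_eq_of_isProbabilityMeasure (μ.map (· * g)) μ

theorem myInvInv : μ.IsInvInvariant := by
  have := myRightInv μ
  constructor
  have h1 : IsProbabilityMeasure μ.inv :=
    Measure.isProbabilityMeasure_map measurable_inv.aemeasurable
  have h2 : μ.inv.IsHaarMeasure :=
    { toIsMulLeftInvariant := inferInstance
      toIsFiniteMeasureOnCompacts := inferInstance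
      toIsOpenPosMeasure := inferInstance }
  exact Measure.isHaarMeasure_eq_of_isProbabilityMeasure μ.inv μ

-- translate formulas
theorem preimage_P (A : Set G) (s t : G) :
    (· * t⁻¹) ⁻¹' ((· * s) ⁻¹' A) = (· * (t⁻¹ * s)) ⁻¹' A := by
  ext x; simp [mul_assoc]

theorem P_diff (hri : μ.IsMulRightInvariant) (A : Set G) (s t : G) :
    μ ((· * s) ⁻¹' A \ (· * t) ⁻¹' A) = μ ((· * (t⁻¹ * s)) ⁻¹' A \ A) := by
  haveI := hri
  have := measure_preimage_mul_right μ t⁻¹ ((· * s) ⁻¹' A \ (· * t) ⁻¹' A)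
  rw [← this, Set.preimage_diff, preimage_P, preimage_P]
  simp

theorem P_diff' (hri : μ.IsMulRightInvariant) (A : Set G) (s t : G) :
    μ ((· * t) ⁻¹' A \ (· * s) ⁻¹' A) = μ (A \ (· * (t⁻¹ * s)) ⁻¹' A) := by
  haveI := hri
  have := measure_preimage_mul_right μ t⁻¹ ((· * t) ⁻¹' A \ (· * s) ⁻¹' A)
  rw [← this, Set.preimage_diff, preimage_P, preimage_P]
  simp

set_option linter.unusedSectionVars false

theorem mySmallDiff (hA : MeasurableSet A) {ε : ℝ≥0∞} (hε : ε ≠ 0) :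
    ∀ᶠ u in nhds (1 : G), μ (A \ (· * u) ⁻¹' A) < ε ∧ μ ((· * u) ⁻¹' A \ A) < ε := by
  haveI := myRightInv μ
  have hε2 : ε / 2 ≠ 0 := (ENNReal.half_pos hε).ne'
  obtain ⟨K, hKA, hKc, hμK⟩ : ∃ K ⊆ A, IsClosed K ∧ μ (A \ K) < ε / 2 :=
    hA.exists_isClosed_diff_lt (measure_ne_top μ A) hε2
  have hK : IsCompact K := hKc.isCompact
  obtain ⟨U, hAU, hU, hμU⟩ : ∃ U ⊇ A, IsOpen U ∧ μ U < μ A + ε / 2 :=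
    A.exists_isOpen_lt_add (measure_ne_top μ A) hε2
  have hμUA : μ (U \ A) < ε / 2 :=
    measure_diff_lt_of_lt_add hA.nullMeasurableSet hAU (measure_ne_top μ A) hμU
  obtain ⟨V, hV, hKVU⟩ : ∃ V ∈ nhds (1 : G), K * V ⊆ U :=
    compact_open_separated_mul_right hK hU (hKA.trans hAU)
  have h2 : ∀ᶠ u in nhds (1 : G), u ∈ V := hV
  have h3 : ∀ᶠ u in nhds (1 : G), u⁻¹ ∈ V := by
    have hc : Filter.Tendsto (fun u : G => u⁻¹) (nhds 1) (nhds 1) := by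
      simpa using (continuous_inv.tendsto (1 : G))
    exact hc.eventually h2
  filter_upwards [h2, h3] with u hu hui
  constructor
  · have hsub : A \ (· * u) ⁻¹' A ⊆ (A \ K) ∪ (· * u) ⁻¹' (U \ A) := by
      rintro x ⟨hxA, hxP⟩
      by_cases hxK : x ∈ K
      · exact Or.inr ⟨hKVU (Set.mul_mem_mul hxK hu), hxP⟩
      · exact Or.inl ⟨hxA, hxK⟩
    calc μ (A \ (· * u) ⁻¹' A) ≤ μ ((A \ K) ∪ (· * u) ⁻¹' (U \ A)) := measure_mono hsub
      _ ≤ μ (A \ K) + μ ((· * u) ⁻¹' (U \ A)) := measure_union_le _ _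
      _ = μ (A \ K) + μ (U \ A) := by rw [measure_preimage_mul_right]
      _ < ε / 2 + ε / 2 := ENNReal.add_lt_add hμK hμUA
      _ = ε := ENNReal.add_halves ε
  · have hsub : (· * u) ⁻¹' A \ A ⊆ (· * u) ⁻¹' (A \ K) ∪ (U \ A) := by
      rintro x ⟨hxP, hxA⟩
      by_cases hxK : x * u ∈ K
      · refine Or.inr ⟨?_, hxA⟩
        have : (x * u) * u⁻¹ ∈ U := hKVU (Set.mul_mem_mul hxK hui)
        simpa using this
      · exact Or.inl ⟨hxP, hxK⟩
    calc μ ((· * u) ⁻¹' A \ A) ≤ μ ((· * u) ⁻¹' (A \ K) ∪ (U \ A)) := measure_mono hsub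
      _ ≤ μ ((· * u) ⁻¹' (A \ K)) + μ (U \ A) := measure_union_le _ _
      _ = μ (A \ K) + μ (U \ A) := by rw [measure_preimage_mul_right]
      _ < ε / 2 + ε / 2 := ENNReal.add_lt_add hμK hμUA
      _ = ε := ENNReal.add_halves ε

theorem cont_inter (hA : MeasurableSet A) (B : Set G) :
    Continuous fun g : G => μ (B ∩ (· * g) ⁻¹' A) := by
  haveI := myRightInv μ
  rw [continuous_iff_continuousAt]
  intro g₀
  rw [ContinuousAt, ENNReal.tendsto_nhds (measure_ne_top μ _)]
  intro ε hε
  have h1 : Filter.Tendsto (fun g : G => g₀⁻¹ * g) (nhds g₀) (nhds 1) := by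
    have := (continuous_const.mul continuous_id).tendsto g₀ (f := fun g : G => g₀⁻¹ * g)
    simpa using this
  filter_upwards [h1.eventually (mySmallDiff μ hA hε.ne')] with g hg
  obtain ⟨hg1, hg2⟩ := hg
  have key1 : μ ((· * g) ⁻¹' A \ (· * g₀) ⁻¹' A) < ε := by
    rw [P_diff μ (myRightInv μ) A g g₀]; exact hg2
  have key2 : μ ((· * g₀) ⁻¹' A \ (· * g) ⁻¹' A) < ε := by
    rw [P_diff' μ (myRightInv μ) A g g₀]; exact hg1
  have bound : ∀ s t : G, μ (B ∩ (· * s) ⁻¹' A) ≤ μ (B ∩ (· * t) ⁻¹' A) +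
      μ ((· * s) ⁻¹' A \ (· * t) ⁻¹' A) := by
    intro s t
    have hsub : B ∩ (· * s) ⁻¹' A ⊆ (B ∩ (· * t) ⁻¹' A) ∪ ((· * s) ⁻¹' A \ (· * t) ⁻¹' A) := by
      rintro x ⟨hxB, hxP⟩
      by_cases hx : x ∈ (· * t) ⁻¹' A
      · exact Or.inl ⟨hxB, hx⟩
      · exact Or.inr ⟨hxP, hx⟩
    exact (measure_mono hsub).trans (measure_union_le _ _)
  constructor
  · rw [tsub_le_iff_right]
    exact (bound g₀ g).trans (add_le_add le_rfl key2.le)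
  · exact (bound g g₀).trans (add_le_add le_rfl key1.le)

theorem cont_iInter (hA : MeasurableSet A) (k : ℕ) (hk : k ≠ 0) :
    Continuous fun g : Fin k → G => μ (⋂ i, (· * g i) ⁻¹' A) := by
  haveI := myRightInv μ
  rw [continuous_iff_continuousAt]
  intro g₀
  rw [ContinuousAt, ENNReal.tendsto_nhds (measure_ne_top μ _)]
  intro ε hε
  set δ : ℝ≥0∞ := ε / k with hδdef
  have hδ : δ ≠ 0 := by
    simp only [hδdef, ne_eq, ENNReal.div_eq_zero_iff]
    push_neg
    exact ⟨hε.ne', ENNReal.natCast_ne_top k⟩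
  have hkδ : (k : ℝ≥0∞) * δ ≤ ε := ENNReal.mul_div_le
  have h1 : ∀ i : Fin k, Filter.Tendsto (fun g : Fin k → G => (g₀ i)⁻¹ * g i)
      (nhds g₀) (nhds 1) := by
    intro i
    have hc : Continuous fun g : Fin k → G => (g₀ i)⁻¹ * g i :=
      continuous_const.mul (continuous_apply i)
    have := hc.tendsto g₀
    simpa using this
  have hev : ∀ᶠ g : (Fin k → G) in nhds g₀, ∀ i,
      μ (A \ (· * ((g₀ i)⁻¹ * g i)) ⁻¹' A) < δ ∧ μ ((· * ((g₀ i)⁻¹ * g i)) ⁻¹' A \ A) < δ := by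
    rw [Filter.eventually_all]
    intro i
    exact (h1 i).eventually (mySmallDiff μ hA hδ)
  filter_upwards [hev] with g hg
  have bound : ∀ a b : Fin k → G, (∀ i, μ ((· * a i) ⁻¹' A \ (· * b i) ⁻¹' A) ≤ δ) →
      μ (⋂ i, (· * a i) ⁻¹' A) ≤ μ (⋂ i, (· * b i) ⁻¹' A) + ε := by
    intro a b hab
    have hsub : (⋂ i, (· * a i) ⁻¹' A) ⊆
        (⋂ i, (· * b i) ⁻¹' A) ∪ ⋃ i, ((· * a i) ⁻¹' A \ (· * b i) ⁻¹' A) := by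
      intro x hx
      rw [Set.mem_iInter] at hx
      by_cases h : ∀ i, x ∈ (· * b i) ⁻¹' A
      · exact Or.inl (Set.mem_iInter.2 h)
      · push_neg at h
        obtain ⟨i, hi⟩ := h
        exact Or.inr (Set.mem_iUnion.2 ⟨i, hx i, hi⟩)
    calc μ (⋂ i, (· * a i) ⁻¹' A)
        ≤ μ ((⋂ i, (· * b i) ⁻¹' A) ∪ ⋃ i, ((· * a i) ⁻¹' A \ (· * b i) ⁻¹' A)) :=
          measure_mono hsub
      _ ≤ μ (⋂ i, (· * b i) ⁻¹' A) + μ (⋃ i, ((· * a i) ⁻¹' A \ (· * b i) ⁻¹' A)) :=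
          measure_union_le _ _
      _ ≤ μ (⋂ i, (· * b i) ⁻¹' A) + ∑ i, μ ((· * a i) ⁻¹' A \ (· * b i) ⁻¹' A) := by
          gcongr
          exact measure_iUnion_fintype_le _ _
      _ ≤ μ (⋂ i, (· * b i) ⁻¹' A) + ∑ _i : Fin k, δ := by
          gcongr with i
          exact hab i
      _ ≤ μ (⋂ i, (· * b i) ⁻¹' A) + ε := by
          gcongr
          simp only [Finset.sum_const, Finset.card_univ, Fintype.card_fin, nsmul_eq_mul]
          exact hkδ
  constructor
  · rw [tsub_le_iff_right]
    refine bound g₀ g ?_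
    intro i
    rw [P_diff' μ (myRightInv μ) A (g i) (g₀ i)]
    exact (hg i).1.le
  · refine bound g g₀ ?_
    intro i
    rw [P_diff μ (myRightInv μ) A (g i) (g₀ i)]
    exact (hg i).2.le

theorem avg_identity (hA : MeasurableSet A) (B : Set G) (hB : MeasurableSet B) :
    ∫⁻ g, μ (B ∩ (· * g) ⁻¹' A) ∂μ = μ A * μ B := by
  haveI := myRightInv μ
  haveI := myInvInv μ
  have hPmeas : ∀ g : G, MeasurableSet ((· * g) ⁻¹' A) := fun g =>
    hA.preimage (measurable_mul_const g)
  -- the measure ρ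
  set m : ∀ s : Set G, MeasurableSet s → ℝ≥0∞ :=
    fun s _ => ∫⁻ g, μ (s ∩ (· * g) ⁻¹' A) ∂μ with hm
  have m0 : m ∅ MeasurableSet.empty = 0 := by simp [hm]
  have mU : ∀ ⦃f : ℕ → Set G⦄ (h : ∀ i, MeasurableSet (f i)),
      Pairwise (Function.onFun Disjoint f) → m (⋃ i, f i) (MeasurableSet.iUnion h) = ∑' i, m (f i) (h i) := by
    intro f hf hd
    simp only [hm]
    have h1 : ∀ g : G, μ ((⋃ i, f i) ∩ (· * g) ⁻¹' A) = ∑' i, μ (f i ∩ (· * g) ⁻¹' A) := by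
      intro g
      rw [Set.iUnion_inter]
      exact measure_iUnion (hd.mono fun i j h => h.mono Set.inter_subset_left
        Set.inter_subset_left) (fun i => (hf i).inter (hPmeas g))
    simp_rw [h1]
    exact lintegral_tsum fun i => ((cont_inter μ hA (f i)).measurable).aemeasurable
  set ρ : Measure G := Measure.ofMeasurable m m0 mU with hρ
  have hρapp : ∀ s : Set G, MeasurableSet s → ρ s = ∫⁻ g, μ (s ∩ (· * g) ⁻¹' A) ∂μ :=
    fun s hs => Measure.ofMeasurable_apply s hs
  -- ρ is right invariant
  haveI hρright : ρ.IsMulRightInvariant := by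
    constructor
    intro h
    ext s hs
    rw [Measure.map_apply (measurable_mul_const h) hs, hρapp _ (hs.preimage (measurable_mul_const h)),
      hρapp s hs]
    have key : ∀ g : G, (· * h) ⁻¹' s ∩ (· * g) ⁻¹' A = (· * h) ⁻¹' (s ∩ (· * (h⁻¹ * g)) ⁻¹' A) := by
      intro g
      ext x
      simp [mul_assoc]
    calc ∫⁻ g, μ ((· * h) ⁻¹' s ∩ (· * g) ⁻¹' A) ∂μ
        = ∫⁻ g, μ (s ∩ (· * (h⁻¹ * g)) ⁻¹' A) ∂μ := by
          refine lintegral_congr fun g => ?_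
          rw [key g, measure_preimage_mul_right]
      _ = ∫⁻ g, μ (s ∩ (· * g) ⁻¹' A) ∂μ :=
          lintegral_mul_left_eq_self (fun g => μ (s ∩ (· * g) ⁻¹' A)) h⁻¹
  -- ρ is finite
  have hρuniv : ρ Set.univ = μ A := by
    rw [hρapp _ MeasurableSet.univ]
    simp_rw [Set.univ_inter]
    have : ∀ g : G, μ ((· * g) ⁻¹' A) = μ A := fun g => measure_preimage_mul_right μ g A
    simp_rw [this]
    simp
  haveI : IsFiniteMeasure ρ := ⟨by rw [hρuniv]; exact (prob_le_one (μ := μ)).trans_lt (by norm_num)⟩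
  haveI : IsFiniteMeasureOnCompacts ρ := ⟨fun _ _ => measure_lt_top ρ _⟩
  haveI : ρ.inv.IsMulLeftInvariant := inferInstance
  haveI : IsFiniteMeasureOnCompacts ρ.inv := inferInstance
  have huniq : ρ.inv = Measure.haarScalarFactor ρ.inv μ • μ :=
    Measure.isMulInvariant_eq_smul_of_compactSpace ρ.inv μ
  have hc : (Measure.haarScalarFactor ρ.inv μ : ℝ≥0∞) = μ A := by
    have h2 : ρ.inv Set.univ = μ A := by
      rw [Measure.inv_apply, Set.inv_univ, hρuniv]
    rw [huniq] at h2
    rw [Measure.smul_apply, measure_univ, ENNReal.smul_def, smul_eq_mul, mul_one] at h2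
    exact h2
  calc ∫⁻ g, μ (B ∩ (· * g) ⁻¹' A) ∂μ = ρ B := (hρapp B hB).symm
    _ = ρ.inv B⁻¹ := by rw [Measure.inv_apply, inv_inv]
    _ = (Measure.haarScalarFactor ρ.inv μ : ℝ≥0∞) * μ B⁻¹ := by
        have := congrArg (fun ν : Measure G => ν B⁻¹) huniq
        rw [Measure.smul_apply, ENNReal.smul_def, smul_eq_mul] at this
        exact this
    _ = μ A * μ B := by rw [hc, Measure.measure_inv]

theorem low_point (hA : MeasurableSet A) (n : ℕ) :
    ∃ g : Fin (n + 1) → G, μ (⋂ i, (· * g i) ⁻¹' A) ≤ μ A ^ (n + 1) := by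
  induction n with
  | zero =>
    refine ⟨fun _ => 1, ?_⟩
    have h1 : (⋂ _i : Fin 1, (· * (1 : G)) ⁻¹' A) = A := by
      simp [mul_one, Set.iInter_const]
    rw [h1, pow_one]
  | succ n ih =>
    obtain ⟨g, hg⟩ := ih
    set B := ⋂ i, (· * g i) ⁻¹' A with hB
    have hBmeas : MeasurableSet B :=
      MeasurableSet.iInter fun i => hA.preimage (measurable_mul_const (g i))
    have hexists : ∃ h : G, μ (B ∩ (· * h) ⁻¹' A) ≤ μ A * μ B := by
      by_contra hcon
      push_neg at hcon
      have hne : μ ≠ 0 := IsProbabilityMeasure.ne_zero μ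
      have hfi : ∫⁻ _x, μ A * μ B ∂μ ≠ ⊤ := by
        rw [lintegral_const, measure_univ, mul_one]
        exact ENNReal.mul_ne_top (measure_ne_top μ A) (measure_ne_top μ B)
      have hstrict : ∫⁻ _x, μ A * μ B ∂μ < ∫⁻ h, μ (B ∩ (· * h) ⁻¹' A) ∂μ :=
        lintegral_strict_mono (f := fun _ => μ A * μ B) hne
          ((cont_inter μ hA B).measurable.aemeasurable) hfi
          (Filter.Eventually.of_forall hcon)
      rw [lintegral_const, avg_identity μ hA B hBmeas, measure_univ, mul_one] at hstrict
      exact lt_irrefl _ hstrict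
    obtain ⟨h, hh⟩ := hexists
    refine ⟨Fin.cons h g, ?_⟩
    have heq : (⋂ i, (· * (Fin.cons h g : Fin (n + 2) → G) i) ⁻¹' A) = B ∩ (· * h) ⁻¹' A := by
      ext x
      simp only [Set.mem_iInter, Fin.forall_fin_succ, Fin.cons_zero, Fin.cons_succ,
        Set.mem_inter_iff, hB]
      tauto
    rw [heq]
    calc μ (B ∩ (· * h) ⁻¹' A) ≤ μ A * μ B := hh
      _ ≤ μ A * μ A ^ (n + 1) := mul_le_mul_right hg _
      _ = μ A ^ (n + 2) := (pow_succ' (μ A) (n + 1)).symm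

theorem final {k : ℕ} (hA : MeasurableSet A) [ConnectedSpace G] (hk : 2 ≤ k) :
    ∃ g : Fin k → G, μ (⋂ i, (fun a => a * g i) '' A) = (μ A) ^ k := by
  haveI : Nonempty (Fin k) := ⟨⟨0, by omega⟩⟩
  obtain ⟨n, rfl⟩ : ∃ n, k = n + 1 := ⟨k - 1, by omega⟩
  obtain ⟨a, ha⟩ := low_point μ hA n
  have hb : μ A ^ (n + 1) ≤ μ (⋂ _i : Fin (n + 1), (· * (1 : G)) ⁻¹' A) := by
    have h1 : (⋂ _i : Fin (n + 1), (· * (1 : G)) ⁻¹' A) = A := by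
      simp [mul_one, Set.iInter_const]
    rw [h1]
    calc μ A ^ (n + 1) ≤ μ A ^ 1 :=
          pow_le_pow_of_le_one zero_le prob_le_one (by omega)
      _ = μ A := pow_one _
  obtain ⟨x, hx⟩ := intermediate_value_univ₂ (a := a) (b := fun _ => (1 : G))
    (cont_iInter μ hA (n + 1) (by omega)) (continuous_const (y := μ A ^ (n + 1))) ha hb
  refine ⟨fun i => (x i)⁻¹, ?_⟩
  have himg : ∀ i : Fin (n + 1), (fun a => a * (x i)⁻¹) '' A = (· * x i) ⁻¹' A := by
    intro i
    rw [Set.image_mul_right, inv_inv]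
  simp_rw [himg]
  exact hx

end Aux

theorem exists_translates_inter_eq_pow {G : Type*} [Group G] [TopologicalSpace G]
    [IsTopologicalGroup G] [CompactSpace G] [ConnectedSpace G]
    [MeasurableSpace G] [BorelSpace G]
    (μ : Measure G) [μ.IsHaarMeasure] [IsProbabilityMeasure μ]
    (A : Set G) (hA : MeasurableSet A) (k : ℕ) (hk : 2 ≤ k) :
    ∃ g : Fin k → G, μ (⋂ i, (fun a => a * g i) '' A) = (μ A) ^ k := by
  exact final μ hA hk
end

section
/- Let λ be a Borel probability measure on Aut(X,μ), let ρ = ρ⁺(λ), let κ > ρ, and write λ = κλ₁ + (1−κ)λ₂ with λ₁, λ₂ Borel probability measures on Aut(X,μ). Then every λ₁-invariant measurable set Y of positive measure satisfies μ(Y) ≥ (κ−ρ)/(1−ρ). -/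
open MeasureTheory
open scoped ENNReal

/-- The expected boundary measure `e_λ(Y) = ∫ μ(Ya \ Y) dλ(a)`. -/
noncomputable def expBoundary {X Ω : Type*} [MeasurableSpace X] [MeasurableSpace Ω]
    (μ : Measure X) (P : Measure Ω) (a : Ω → X ≃ᵐ X) (Y : Set X) : ℝ≥0∞ :=
  ∫⁻ ω, μ ((a ω) '' Y \ Y) ∂P

/-- `ρ⁺(λ)`: top of the spectrum of the averaging operator on `L²₀`. -/
noncomputable def rhoPlus {X Ω : Type*} [MeasurableSpace X] [MeasurableSpace Ω]
    (μ : Measure X) (P : Measure Ω) (a : Ω → X ≃ᵐ X) : ℝ :=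
  sSup { r : ℝ | ∃ f : X → ℝ, MemLp f 2 μ ∧ (∫ x, f x ∂μ) = 0 ∧
    (∫ x, f x ^ 2 ∂μ) ≠ 0 ∧
    r = (∫ ω, (∫ x, f ((a ω) x) * f x ∂μ) ∂P) / (∫ x, f x ^ 2 ∂μ) }

lemma aux_indicator_inner {X : Type*} [MeasurableSpace X]
    (μ : Measure X) [IsProbabilityMeasure μ] {A Y : Set X}
    (hA : MeasurableSet A) (hY : MeasurableSet Y) (m : ℝ)
    (hmA : (μ A).toReal = m) (hmY : (μ Y).toReal = m) :
    ∫ x, (A.indicator (fun _ => (1:ℝ)) x - m) * (Y.indicator (fun _ => (1:ℝ)) x - m) ∂μ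
      = (μ (A ∩ Y)).toReal - m ^ 2 := by
  have hint : ∀ {s : Set X}, MeasurableSet s → ∀ cst : ℝ,
      Integrable (s.indicator fun _ => cst) μ := fun hs cst =>
    memLp_one_iff_integrable.1 (memLp_indicator_const 1 hs cst (Or.inr (measure_ne_top μ _)))
  have hpt : ∀ x, (A.indicator (fun _ => (1:ℝ)) x - m) * (Y.indicator (fun _ => (1:ℝ)) x - m)
      = (A ∩ Y).indicator (fun _ => (1:ℝ)) x
        + (A.indicator (fun _ => -m) x + (Y.indicator (fun _ => -m) x + m ^ 2)) := by
    intro x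
    by_cases hxA : x ∈ A <;> by_cases hxY : x ∈ Y <;>
      simp [Set.indicator_of_mem, Set.indicator_of_notMem, hxA, hxY, Set.mem_inter_iff] <;> ring
  have h3 : Integrable (fun x => Y.indicator (fun _ => -m) x + m ^ 2) μ :=
    (hint hY (-m)).add (integrable_const _)
  have h2 : Integrable (fun x => A.indicator (fun _ => -m) x
      + (Y.indicator (fun _ => -m) x + m ^ 2)) μ := (hint hA (-m)).add h3
  rw [integral_congr_ae (Filter.Eventually.of_forall hpt),
    integral_add (hint (hA.inter hY) 1) h2, integral_add (hint hA (-m)) h3,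
    integral_add (hint hY (-m)) (integrable_const _),
    integral_indicator_const _ (hA.inter hY), integral_indicator_const _ hA,
    integral_indicator_const _ hY, integral_const]
  simp only [measureReal_def, hmA, hmY, smul_eq_mul, measure_univ, ENNReal.toReal_one]
  ring

lemma aux_bdd {X Ω : Type*} [MeasurableSpace X] [MeasurableSpace Ω]
    (μ : Measure X) (P : Measure Ω) (a : Ω → X ≃ᵐ X)
    [IsProbabilityMeasure μ] [IsProbabilityMeasure P]
    (ha : ∀ ω, MeasurePreserving (a ω) μ μ) :
    BddAbove { r : ℝ | ∃ f : X → ℝ, MemLp f 2 μ ∧ (∫ x, f x ∂μ) = 0 ∧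
      (∫ x, f x ^ 2 ∂μ) ≠ 0 ∧
      r = (∫ ω, (∫ x, f ((a ω) x) * f x ∂μ) ∂P) / (∫ x, f x ^ 2 ∂μ) } := by
  refine ⟨1, ?_⟩
  rintro r ⟨f, hf, -, hne, rfl⟩
  set D := ∫ x, f x ^ 2 ∂μ with hD
  have hD0 : 0 < D := lt_of_le_of_ne (integral_nonneg fun x => sq_nonneg _) (Ne.symm hne)
  have hint_sq : Integrable (fun x => f x ^ 2) μ := hf.integrable_sq
  have key : ∀ ω, |∫ x, f ((a ω) x) * f x ∂μ| ≤ D := by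
    intro ω
    have hemb : MeasurableEmbedding (a ω) := (a ω).measurableEmbedding
    have hu_sq_int : Integrable (fun x => f ((a ω) x) ^ 2) μ :=
      ((ha ω).integrable_comp_emb hemb).2 hint_sq
    have hu_sq : ∫ x, f ((a ω) x) ^ 2 ∂μ = D :=
      (ha ω).integral_comp hemb (fun x => f x ^ 2)
    have h1 : |∫ x, f ((a ω) x) * f x ∂μ| ≤ ∫ x, |f ((a ω) x) * f x| ∂μ := by
      simpa [Real.norm_eq_abs, abs_mul] using
        norm_integral_le_integral_norm (fun x => f ((a ω) x) * f x) (μ := μ)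
    have h2 : ∫ x, |f ((a ω) x) * f x| ∂μ ≤ ∫ x, (f ((a ω) x) ^ 2 + f x ^ 2) / 2 ∂μ := by
      refine integral_mono_of_nonneg (Filter.Eventually.of_forall fun x => abs_nonneg _)
        ((hu_sq_int.add hint_sq).div_const 2)
        (Filter.Eventually.of_forall fun x => ?_)
      simp only
      rw [abs_mul]
      nlinarith [sq_nonneg (|f ((a ω) x)| - |f x|), sq_abs (f ((a ω) x)), sq_abs (f x)]
    have h3 : ∫ x, (f ((a ω) x) ^ 2 + f x ^ 2) / 2 ∂μ = D := by
      rw [integral_div, integral_add hu_sq_int hint_sq, hu_sq]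
      ring
    linarith
  have hN : |∫ ω, (∫ x, f ((a ω) x) * f x ∂μ) ∂P| ≤ D := by
    have := norm_integral_le_of_norm_le_const (μ := P)
      (f := fun ω => ∫ x, f ((a ω) x) * f x ∂μ) (C := D)
      (Filter.Eventually.of_forall fun ω => by simpa [Real.norm_eq_abs] using key ω)
    simpa [Real.norm_eq_abs, measure_univ] using this
  rw [div_le_one hD0]
  exact le_trans (le_abs_self _) hN

theorem invariant_set_measure_lower_bound {X Ω : Type*} [MeasurableSpace X]
    [MeasurableSpace Ω] (μ : Measure X) (P P₁ P₂ : Measure Ω) (a : Ω → X ≃ᵐ X)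
    [IsProbabilityMeasure μ] [IsProbabilityMeasure P]
    [IsProbabilityMeasure P₁] [IsProbabilityMeasure P₂]
    (ha : ∀ ω, MeasurePreserving (a ω) μ μ)
    (hj : Measurable fun p : Ω × X => (a p.1) p.2)
    (κ : ℝ) (hκ1 : κ ≤ 1)
    (hρ : rhoPlus μ P a < κ)
    (hdec : P = ENNReal.ofReal κ • P₁ + ENNReal.ofReal (1 - κ) • P₂)
    (Y : Set X) (hY : MeasurableSet Y) (hYpos : 0 < μ Y)
    (hinv : expBoundary μ P₁ a Y = 0) :
    ENNReal.ofReal ((κ - rhoPlus μ P a) / (1 - rhoPlus μ P a)) ≤ μ Y := by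
  set ρ := rhoPlus μ P a with hρdef
  have hρ1 : ρ < 1 := lt_of_lt_of_le hρ hκ1
  have h1ρ : (0:ℝ) < 1 - ρ := by linarith
  have hμYfin : μ Y ≠ ⊤ := measure_ne_top μ Y
  set m := (μ Y).toReal with hm
  have hm_pos : 0 < m := ENNReal.toReal_pos hYpos.ne' hμYfin
  by_cases hm1 : 1 ≤ μ Y
  · refine le_trans ?_ hm1
    rw [ENNReal.ofReal_le_one]
    rw [div_le_one h1ρ]
    linarith
  -- main case : μ Y < 1
  push_neg at hm1
  have hm_lt1 : m < 1 := by
    have := ENNReal.toReal_lt_toReal hμYfin (by simp : (1:ℝ≥0∞) ≠ ⊤) |>.2 hm1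
    simpa using this
  -- the slice measure c
  set c : Ω → ℝ≥0∞ := fun ω => μ ((a ω) ⁻¹' Y ∩ Y) with hc
  have hS : MeasurableSet {p : Ω × X | (a p.1) p.2 ∈ Y ∧ p.2 ∈ Y} :=
    (hj hY).inter (measurable_snd hY)
  have hc_meas : Measurable c := by
    have h := measurable_measure_prodMk_left (ν := μ) hS
    convert h using 2
    rfl
  have hc_le : ∀ ω, c ω ≤ μ Y := fun ω => measure_mono Set.inter_subset_right
  -- boundary identity
  have hbnd : ∀ ω, μ ((a ω) '' Y \ Y) = μ Y - c ω := by
    intro ω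
    have himg : MeasurableSet ((a ω) '' Y) := (a ω).measurableSet_image.2 hY
    have h1 : (a ω) ⁻¹' ((a ω) '' Y \ Y) = Y \ ((a ω) ⁻¹' Y) := by
      rw [Set.preimage_diff, Set.preimage_image_eq Y (a ω).injective]
    have h2 : μ ((a ω) '' Y \ Y) = μ (Y \ ((a ω) ⁻¹' Y)) := by
      rw [← h1]
      exact ((ha ω).measure_preimage (himg.diff hY).nullMeasurableSet).symm
    rw [h2]
    have h3 := measure_inter_add_diff (μ := μ) Y ((a ω).measurable hY : MeasurableSet ((a ω) ⁻¹' Y))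
    have h4 : μ (Y ∩ ((a ω) ⁻¹' Y)) = c ω := by rw [hc, Set.inter_comm]
    rw [h4] at h3
    rw [← h3, ENNReal.add_sub_cancel_left (lt_of_le_of_lt (hc_le ω) (Ne.lt_top hμYfin)).ne]
  -- e_P + L = μ Y
  set L := ∫⁻ ω, c ω ∂P with hL
  have heP : expBoundary μ P a Y + L = μ Y := by
    rw [expBoundary, hL, ← lintegral_add_right _ hc_meas]
    have : ∀ ω, μ ((a ω) '' Y \ Y) + c ω = μ Y := fun ω => by
      rw [hbnd ω, tsub_add_cancel_of_le (hc_le ω)]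
    rw [lintegral_congr this]
    simp
  have hLle : L ≤ μ Y := le_trans le_add_self heP.le
  have hLfin : L ≠ ⊤ := (lt_of_le_of_lt hLle (Ne.lt_top hμYfin)).ne
  -- decomposition bound
  have heP2 : expBoundary μ P a Y ≤ ENNReal.ofReal (1 - κ) * μ Y := by
    rw [expBoundary, hdec, lintegral_add_measure, lintegral_smul_measure, lintegral_smul_measure]
    rw [show ∫⁻ ω, μ ((a ω) '' Y \ Y) ∂P₁ = 0 from hinv, smul_zero, zero_add, smul_eq_mul]
    calc ENNReal.ofReal (1 - κ) * ∫⁻ ω, μ ((a ω) '' Y \ Y) ∂P₂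
        ≤ ENNReal.ofReal (1 - κ) * ∫⁻ _, μ Y ∂P₂ := by
          refine mul_le_mul_right (lintegral_mono fun ω => ?_) _
          rw [hbnd ω]; exact tsub_le_self
      _ = ENNReal.ofReal (1 - κ) * μ Y := by simp
  -- real inequality from boundary
  have key1 : m - L.toReal ≤ (1 - κ) * m := by
    have he : expBoundary μ P a Y = μ Y - L := ENNReal.eq_sub_of_add_eq hLfin heP
    have hePle : μ Y - L ≤ ENNReal.ofReal (1 - κ) * μ Y := he ▸ heP2
    have h := ENNReal.toReal_mono (ENNReal.mul_ne_top ENNReal.ofReal_ne_top hμYfin) hePle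
    rw [ENNReal.toReal_sub_of_le hLle hμYfin, ENNReal.toReal_mul,
      ENNReal.toReal_ofReal (by linarith : (0:ℝ) ≤ 1 - κ)] at h
    exact h
  -- the test function
  set f : X → ℝ := fun x => Y.indicator (fun _ => (1:ℝ)) x - m with hf
  have hf_mem : MemLp f 2 μ :=
    (memLp_indicator_const 2 hY 1 (Or.inr hμYfin)).sub (memLp_const m)
  have hind_int : Integrable (Y.indicator fun _ => (1:ℝ)) μ :=
    memLp_one_iff_integrable.1 (memLp_indicator_const 1 hY 1 (Or.inr hμYfin))
  have hf_int0 : (∫ x, f x ∂μ) = 0 := by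
    simp only [hf]
    rw [integral_sub hind_int (integrable_const m), integral_indicator_const _ hY, integral_const]
    simp [hm, measureReal_def]
  have hsq_eq : (∫ x, f x ^ 2 ∂μ) = m - m ^ 2 := by
    have h := aux_indicator_inner μ hY hY m hm.symm hm.symm
    rw [Set.inter_self, hm.symm] at h
    rw [← h]
    refine integral_congr_ae (Filter.Eventually.of_forall fun x => ?_)
    simp only [hf]
    ring
  have hc_fin : ∀ ω, c ω ≠ ⊤ := fun ω => (lt_of_le_of_lt (hc_le ω) (Ne.lt_top hμYfin)).ne
  have hinner : ∀ ω, (∫ x, f ((a ω) x) * f x ∂μ) = (c ω).toReal - m ^ 2 := by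
    intro ω
    have hA : MeasurableSet ((a ω) ⁻¹' Y) := (a ω).measurable hY
    have hmA : (μ ((a ω) ⁻¹' Y)).toReal = m := by
      rw [(ha ω).measure_preimage hY.nullMeasurableSet]
    have h := aux_indicator_inner μ hA hY m hmA hm.symm
    rw [← h]
    refine integral_congr_ae (Filter.Eventually.of_forall fun x => ?_)
    simp only [hf]
    by_cases hx : (a ω) x ∈ Y <;>
      simp [Set.indicator_of_mem, Set.indicator_of_notMem, hx, Set.mem_preimage]
  -- integrability of c.toReal over P
  have hcR_int : Integrable (fun ω => (c ω).toReal) P := by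
    refine Integrable.mono' (integrable_const (1:ℝ))
      hc_meas.ennreal_toReal.aestronglyMeasurable
      (Filter.Eventually.of_forall fun ω => ?_)
    rw [Real.norm_eq_abs, abs_of_nonneg ENNReal.toReal_nonneg]
    refine ENNReal.toReal_le_of_le_ofReal zero_le_one ?_
    simpa using le_trans (hc_le ω) prob_le_one
  have hLtoReal : ∫ ω, (c ω).toReal ∂P = L.toReal :=
    integral_toReal hc_meas.aemeasurable
      (Filter.Eventually.of_forall fun ω => Ne.lt_top (hc_fin ω))
  have hNum : (∫ ω, (∫ x, f ((a ω) x) * f x ∂μ) ∂P) = L.toReal - m ^ 2 := by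
    rw [integral_congr_ae (Filter.Eventually.of_forall hinner),
      integral_sub hcR_int (integrable_const _), hLtoReal, integral_const]
    simp
  have hsq_ne : (∫ x, f x ^ 2 ∂μ) ≠ 0 := by
    rw [hsq_eq]; nlinarith
  have hmem : ((∫ ω, (∫ x, f ((a ω) x) * f x ∂μ) ∂P) / (∫ x, f x ^ 2 ∂μ)) ≤ ρ := by
    rw [hρdef, rhoPlus]
    exact le_csSup (aux_bdd μ P a ha) ⟨f, hf_mem, hf_int0, hsq_ne, rfl⟩
  have key2 : L.toReal - m ^ 2 ≤ ρ * (m - m ^ 2) := by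
    rw [hNum, hsq_eq] at hmem
    have hpos : (0:ℝ) < m - m ^ 2 := by nlinarith
    exact (div_le_iff₀ hpos).1 hmem
  -- conclude
  have step : (1 - m) * (1 - ρ) ≤ 1 - κ := by
    have h5 : m * ((1 - m) * (1 - ρ)) ≤ m * (1 - κ) := by nlinarith [key1, key2]
    exact le_of_mul_le_mul_left h5 hm_pos
  have hmain : (κ - ρ) / (1 - ρ) ≤ m := by
    rw [div_le_iff₀ h1ρ]
    nlinarith [step]
  calc ENNReal.ofReal ((κ - ρ) / (1 - ρ)) ≤ ENNReal.ofReal m := ENNReal.ofReal_le_ofReal hmain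
    _ = μ Y := by rw [hm, ENNReal.ofReal_toReal hμYfin]
end

section
/- Let λ be a Borel probability measure on Aut(X,μ), ρ = ρ⁺(λ), κ > ρ, and λ = κλ₁ + (1−κ)λ₂ a convex decomposition into probability measures. Then every measurable Y with 0 < μ(Y) ≤ (1/2)·(κ−ρ)/(1−ρ) satisfies e_{λ₁}(Y)/μ(Y) ≥ (1/2)·(κ−ρ)/κ. -/
open MeasureTheory
open scoped ENNReal

theorem rho_set_bdd {X Ω : Type*} [MeasurableSpace X] [MeasurableSpace Ω]
    (μ : Measure X) (P : Measure Ω) (a : Ω → X ≃ᵐ X)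
    [IsProbabilityMeasure μ] [IsProbabilityMeasure P]
    (ha : ∀ ω, MeasurePreserving (a ω) μ μ) :
    ∀ r ∈ { r : ℝ | ∃ f : X → ℝ, MemLp f 2 μ ∧ (∫ x, f x ∂μ) = 0 ∧
      (∫ x, f x ^ 2 ∂μ) ≠ 0 ∧
      r = (∫ ω, (∫ x, f ((a ω) x) * f x ∂μ) ∂P) / (∫ x, f x ^ 2 ∂μ) }, r ≤ 1 := by
  rintro r ⟨f, hf, -, hsq, rfl⟩
  have hC0 : 0 ≤ ∫ x, f x ^ 2 ∂μ := integral_nonneg fun x => sq_nonneg _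
  have hCpos : 0 < ∫ x, f x ^ 2 ∂μ := lt_of_le_of_ne hC0 (Ne.symm hsq)
  set C := ∫ x, f x ^ 2 ∂μ with hC
  have hcomp : ∀ ω, MemLp (fun x => f ((a ω) x)) 2 μ := by
    intro ω
    have := MemLp.comp_of_map (f := a ω) (g := f) (by rwa [(ha ω).map_eq])
      (ha ω).measurable.aemeasurable
    exact this
  have hsqcomp : ∀ ω, ∫ x, f ((a ω) x) ^ 2 ∂μ = C := by
    intro ω
    exact (ha ω).integral_comp (a ω).measurableEmbedding (fun x => f x ^ 2)
  have hinner : ∀ ω, ∫ x, f ((a ω) x) * f x ∂μ ≤ C := by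
    intro ω
    have hint1 : Integrable (fun x => f ((a ω) x) ^ 2) μ := (hcomp ω).integrable_sq
    have hint2 : Integrable (fun x => f x ^ 2) μ := hf.integrable_sq
    have hintd : Integrable (fun x => (f ((a ω) x) ^ 2 + f x ^ 2) / 2) μ :=
      (hint1.add hint2).div_const 2
    have hprod : Integrable (fun x => f ((a ω) x) * f x) μ := by
      refine Integrable.mono' hintd
        ((hcomp ω).aestronglyMeasurable.mul hf.aestronglyMeasurable) ?_
      refine Filter.Eventually.of_forall fun x => ?_
      rw [Real.norm_eq_abs, abs_mul]
      have := two_mul_le_add_sq |f ((a ω) x)| |f x|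
      simp only [sq_abs] at this
      have h2 : (0:ℝ) < 2 := by norm_num
      rw [le_div_iff₀ h2]
      calc |f ((a ω) x)| * |f x| * 2 = 2 * |f ((a ω) x)| * |f x| := by ring
        _ ≤ _ := this
    calc ∫ x, f ((a ω) x) * f x ∂μ
        ≤ ∫ x, (f ((a ω) x) ^ 2 + f x ^ 2) / 2 ∂μ := by
          refine integral_mono hprod hintd fun x => ?_
          have := two_mul_le_add_sq (f ((a ω) x)) (f x)
          linarith
      _ = C := by
          rw [integral_div, integral_add hint1 hint2, hsqcomp ω]; ring
  have houter : ∫ ω, (∫ x, f ((a ω) x) * f x ∂μ) ∂P ≤ C := by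
    by_cases hint : Integrable (fun ω => ∫ x, f ((a ω) x) * f x ∂μ) P
    · calc ∫ ω, (∫ x, f ((a ω) x) * f x ∂μ) ∂P ≤ ∫ _ : Ω, C ∂P :=
          integral_mono hint (integrable_const C) hinner
        _ = C := by simp
    · rw [integral_undef hint]; exact hC0
  rw [div_le_one hCpos]
  exact houter


theorem rayleigh_indicator {X Ω : Type*} [MeasurableSpace X] [MeasurableSpace Ω]
    (μ : Measure X) (P : Measure Ω) (a : Ω → X ≃ᵐ X)
    [IsProbabilityMeasure μ] [IsProbabilityMeasure P]
    (ha : ∀ ω, MeasurePreserving (a ω) μ μ)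
    (hj : Measurable fun p : Ω × X => (a p.1) p.2)
    (Y : Set X) (hY : MeasurableSet Y) (hYpos : 0 < μ Y) (hYlt : (μ Y).toReal < 1) :
    ∃ m J : ℝ, m = (μ Y).toReal ∧
      (∫⁻ ω, μ (Y ∩ (a ω) ⁻¹' Y) ∂P).toReal = J ∧
      (J - m ^ 2) / (m * (1 - m)) ∈ { r : ℝ | ∃ f : X → ℝ, MemLp f 2 μ ∧ (∫ x, f x ∂μ) = 0 ∧
        (∫ x, f x ^ 2 ∂μ) ≠ 0 ∧
        r = (∫ ω, (∫ x, f ((a ω) x) * f x ∂μ) ∂P) / (∫ x, f x ^ 2 ∂μ) } := by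
  set m := (μ Y).toReal with hm
  have hm0 : 0 < m := ENNReal.toReal_pos hYpos.ne' (measure_ne_top μ Y)
  set f : X → ℝ := fun x => Y.indicator (fun _ => (1:ℝ)) x - m with hfdef
  -- measurability of the joint set
  have hS : MeasurableSet {p : Ω × X | p.2 ∈ Y ∧ (a p.1) p.2 ∈ Y} := by
    exact (measurable_snd hY).inter (hj hY)
  have hjm : Measurable fun ω => μ (Y ∩ (a ω) ⁻¹' Y) := by
    have h := measurable_measure_prodMk_left (ν := μ) hS
    have hset : ∀ ω, Prod.mk ω ⁻¹' {p : Ω × X | p.2 ∈ Y ∧ (a p.1) p.2 ∈ Y}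
        = Y ∩ (a ω) ⁻¹' Y := by
      intro ω; ext x; simp [Set.mem_preimage, Set.mem_inter_iff]
    simpa only [hset] using h
  have hjle : ∀ ω, μ (Y ∩ (a ω) ⁻¹' Y) ≤ μ Y := fun ω =>
    measure_mono Set.inter_subset_left
  -- ℒ² membership
  have hfL2 : MemLp f 2 μ :=
    ((memLp_const (1:ℝ)).indicator hY).sub (memLp_const m)
  -- zero mean
  have hint_ind : Integrable (Y.indicator fun _ => (1:ℝ)) μ :=
    (integrable_const (1:ℝ)).indicator hY
  have hmean : (∫ x, f x ∂μ) = 0 := by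
    simp only [hfdef]
    rw [integral_sub hint_ind (integrable_const m), integral_indicator_const _ hY,
      integral_const]
    simp [hm, Measure.real]
  -- second moment
  have hsq : (∫ x, f x ^ 2 ∂μ) = m * (1 - m) := by
    have heq : ∀ x, f x ^ 2 = Y.indicator (fun _ => (1 - 2 * m)) x + m ^ 2 := by
      intro x
      by_cases hx : x ∈ Y <;>
        simp [hfdef, Set.indicator_of_mem, Set.indicator_of_notMem, hx] <;> ring
    rw [integral_congr_ae (Filter.Eventually.of_forall heq),
      integral_add ((integrable_const _).indicator hY) (integrable_const _),
      integral_indicator_const _ hY, integral_const]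
    simp [hm, Measure.real]; ring
  have hsqne : (∫ x, f x ^ 2 ∂μ) ≠ 0 := by
    rw [hsq]; exact (mul_pos hm0 (by linarith)).ne'
  -- inner integral
  have hinner : ∀ ω, (∫ x, f ((a ω) x) * f x ∂μ)
      = (μ (Y ∩ (a ω) ⁻¹' Y)).toReal - m ^ 2 := by
    intro ω
    set W : Set X := (a ω) ⁻¹' Y with hW
    have hWm : MeasurableSet W := (a ω).measurable hY
    have hWμ : μ W = μ Y := (ha ω).measure_preimage hY.nullMeasurableSet
    have heq : ∀ x, f ((a ω) x) * f x =
        (Y ∩ W).indicator (fun _ => (1:ℝ)) x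
          - Y.indicator (fun _ => m) x - W.indicator (fun _ => m) x + m ^ 2 := by
      intro x
      by_cases hx : (a ω) x ∈ Y <;> by_cases hy : x ∈ Y <;>
        simp [hfdef, hW, Set.indicator_apply, Set.mem_preimage, hx, hy,
          Set.mem_inter_iff] <;> ring
    have i1 : Integrable (fun x => (Y ∩ W).indicator (fun _ => (1:ℝ)) x) μ :=
      (integrable_const _).indicator (hY.inter hWm)
    have i2 : Integrable (fun x => Y.indicator (fun _ => m) x) μ :=
      (integrable_const _).indicator hY
    have i3 : Integrable (fun x => W.indicator (fun _ => m) x) μ :=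
      (integrable_const _).indicator hWm
    have i12 : Integrable (fun x => (Y ∩ W).indicator (fun _ => (1:ℝ)) x
        - Y.indicator (fun _ => m) x) μ := i1.sub i2
    have i123 : Integrable (fun x => (Y ∩ W).indicator (fun _ => (1:ℝ)) x
        - Y.indicator (fun _ => m) x - W.indicator (fun _ => m) x) μ := i12.sub i3
    rw [integral_congr_ae (Filter.Eventually.of_forall heq),
      integral_add i123 (integrable_const _),
      integral_sub i12 i3, integral_sub i1 i2,
      integral_indicator_const _ (hY.inter hWm), integral_indicator_const _ hY,
      integral_indicator_const _ hWm, integral_const]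
    simp only [Measure.real, hWμ]
    have hWY : (μ (Y ∩ W)).toReal = (μ (Y ∩ (a ω) ⁻¹' Y)).toReal := by rw [hW]
    simp [hm, hWY]
    ring
  -- outer integral
  have hjint : Integrable (fun ω => (μ (Y ∩ (a ω) ⁻¹' Y)).toReal) P := by
    refine ⟨(hjm.ennreal_toReal).aestronglyMeasurable, ?_⟩
    refine HasFiniteIntegral.of_bounded (C := 1) (Filter.Eventually.of_forall fun ω => ?_)
    rw [Real.norm_eq_abs, abs_of_nonneg ENNReal.toReal_nonneg]
    exact ENNReal.toReal_le_of_le_ofReal zero_le_one (by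
      simpa using (hjle ω).trans prob_le_one)
  have houter : (∫ ω, (∫ x, f ((a ω) x) * f x ∂μ) ∂P)
      = (∫⁻ ω, μ (Y ∩ (a ω) ⁻¹' Y) ∂P).toReal - m ^ 2 := by
    rw [integral_congr_ae (Filter.Eventually.of_forall hinner),
      integral_sub hjint (integrable_const _), integral_const,
      integral_toReal hjm.aemeasurable (Filter.Eventually.of_forall fun ω =>
        lt_of_le_of_lt (hjle ω) (measure_lt_top μ Y))]
    simp
  exact ⟨m, _, rfl, rfl, ⟨f, hfL2, hmean, hsqne, by rw [houter, hsq]⟩⟩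


theorem small_sets_expand {X Ω : Type*} [MeasurableSpace X]
    [MeasurableSpace Ω] (μ : Measure X) (P P₁ P₂ : Measure Ω) (a : Ω → X ≃ᵐ X)
    [IsProbabilityMeasure μ] [IsProbabilityMeasure P]
    [IsProbabilityMeasure P₁] [IsProbabilityMeasure P₂]
    (ha : ∀ ω, MeasurePreserving (a ω) μ μ)
    (hj : Measurable fun p : Ω × X => (a p.1) p.2)
    (κ : ℝ) (hκ1 : κ ≤ 1)
    (hρ : rhoPlus μ P a < κ)
    (hdec : P = ENNReal.ofReal κ • P₁ + ENNReal.ofReal (1 - κ) • P₂)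
    (Y : Set X) (hY : MeasurableSet Y) (hYpos : 0 < μ Y)
    (hYsmall : (μ Y).toReal ≤ (1 / 2) * ((κ - rhoPlus μ P a) / (1 - rhoPlus μ P a))) :
    (1 / 2) * ((κ - rhoPlus μ P a) / κ) ≤
      (expBoundary μ P₁ a Y).toReal / (μ Y).toReal := by
  set ρ := rhoPlus μ P a with hρdef
  by_cases hκ0 : κ ≤ 0
  · -- trivial case
    have hrhs : 0 ≤ (expBoundary μ P₁ a Y).toReal / (μ Y).toReal :=
      div_nonneg ENNReal.toReal_nonneg ENNReal.toReal_nonneg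
    have hlhs : (1 / 2) * ((κ - ρ) / κ) ≤ 0 := by
      rcases eq_or_lt_of_le hκ0 with h | h
      · rw [h]; simp
      · have h1 : (κ - ρ) / κ ≤ 0 :=
          div_nonpos_of_nonneg_of_nonpos (by linarith) hκ0
        linarith
    linarith
  push_neg at hκ0
  have hρ1 : ρ < 1 := lt_of_lt_of_le hρ hκ1
  set m := (μ Y).toReal with hm
  have hm0 : 0 < m := ENNReal.toReal_pos hYpos.ne' (measure_ne_top μ Y)
  have hYlt : m < 1 := by
    have h1 : (κ - ρ) / (1 - ρ) ≤ 1 := by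
      rw [div_le_one (by linarith)]; linarith
    calc m ≤ (1 / 2) * ((κ - ρ) / (1 - ρ)) := hYsmall
      _ ≤ (1 / 2) * 1 := by linarith
      _ < 1 := by norm_num
  have hmsmall : m * (1 - ρ) ≤ (κ - ρ) / 2 := by
    have hpos : (0:ℝ) < 1 - ρ := by linarith
    have h2 := mul_le_mul_of_nonneg_right hYsmall hpos.le
    have h3 : 1 / 2 * ((κ - ρ) / (1 - ρ)) * (1 - ρ) = (κ - ρ) / 2 := by
      field_simp
    linarith
  -- the j function
  set j : Ω → ℝ≥0∞ := fun ω => μ (Y ∩ (a ω) ⁻¹' Y) with hjdef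
  have hjm : Measurable j := by
    have h := measurable_measure_prodMk_left
      (ν := μ) (show MeasurableSet {p : Ω × X | p.2 ∈ Y ∧ (a p.1) p.2 ∈ Y} from
        (measurable_snd hY).inter (hj hY))
    have hset : ∀ ω, Prod.mk ω ⁻¹' {p : Ω × X | p.2 ∈ Y ∧ (a p.1) p.2 ∈ Y}
        = Y ∩ (a ω) ⁻¹' Y := by
      intro ω; ext x; simp [Set.mem_preimage, Set.mem_inter_iff]
    simpa only [hjdef, hset] using h
  have hjle : ∀ ω, j ω ≤ μ Y := fun ω => measure_mono Set.inter_subset_left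
  -- Rayleigh bound
  obtain ⟨m', J, hm', hJdef, hmem⟩ := rayleigh_indicator μ P a ha hj Y hY hYpos hYlt
  rw [← hm] at hm'
  subst hm'
  have hbdd : BddAbove { r : ℝ | ∃ f : X → ℝ, MemLp f 2 μ ∧ (∫ x, f x ∂μ) = 0 ∧
      (∫ x, f x ^ 2 ∂μ) ≠ 0 ∧
      r = (∫ ω, (∫ x, f ((a ω) x) * f x ∂μ) ∂P) / (∫ x, f x ^ 2 ∂μ) } :=
    ⟨1, fun r hr => rho_set_bdd μ P a ha r hr⟩
  have hrle : (J - m ^ 2) / (m * (1 - m)) ≤ ρ := le_csSup hbdd hmem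
  have hJle : J ≤ m ^ 2 + ρ * (m * (1 - m)) := by
    rw [div_le_iff₀ (mul_pos hm0 (by linarith))] at hrle
    linarith
  -- expBoundary identity
  have hpt : ∀ ω, μ ((a ω) '' Y \ Y) = μ Y - j ω := by
    intro ω
    have himg : μ ((a ω) '' Y) = μ Y := by
      rw [MeasurableEquiv.image_eq_preimage_symm]
      exact ((ha ω).symm (a ω)).measure_preimage hY.nullMeasurableSet
    have hintr : μ ((a ω) '' Y ∩ Y) = j ω := by
      have himgm : MeasurableSet ((a ω) '' Y ∩ Y) :=
        ((a ω).measurableSet_image.mpr hY).inter hY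
      rw [← (ha ω).measure_preimage himgm.nullMeasurableSet]
      congr 1
      rw [Set.preimage_inter, Set.preimage_image_eq Y (a ω).injective,
        Set.inter_comm]
    have h1 : μ ((a ω) '' Y \ Y) + μ ((a ω) '' Y ∩ Y) = μ ((a ω) '' Y) :=
      measure_diff_add_inter _ hY
    rw [hintr, himg] at h1
    exact ENNReal.eq_sub_of_add_eq (lt_of_le_of_lt (hjle ω) (measure_lt_top μ Y)).ne h1
  have hexp : ∀ Q : Measure Ω, IsProbabilityMeasure Q →
      expBoundary μ Q a Y = μ Y - ∫⁻ ω, j ω ∂Q := by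
    intro Q hQ
    rw [expBoundary]
    rw [lintegral_congr hpt]
    rw [lintegral_sub hjm
      (by
        refine (lt_of_le_of_lt ?_ (measure_lt_top μ Y)).ne
        calc ∫⁻ ω, j ω ∂Q ≤ ∫⁻ _, μ Y ∂Q := lintegral_mono hjle
          _ = μ Y := by simp)
      (Filter.Eventually.of_forall hjle)]
    simp
  have hJQle : ∀ Q : Measure Ω, IsProbabilityMeasure Q → ∫⁻ ω, j ω ∂Q ≤ μ Y := by
    intro Q hQ
    calc ∫⁻ ω, j ω ∂Q ≤ ∫⁻ _, μ Y ∂Q := lintegral_mono hjle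
      _ = μ Y := by simp
  -- decomposition of the lintegral
  have hdecJ : ∫⁻ ω, j ω ∂P = ENNReal.ofReal κ * ∫⁻ ω, j ω ∂P₁
      + ENNReal.ofReal (1 - κ) * ∫⁻ ω, j ω ∂P₂ := by
    rw [hdec, lintegral_add_measure, lintegral_smul_measure, lintegral_smul_measure,
      smul_eq_mul, smul_eq_mul]
  set t1 := (∫⁻ ω, j ω ∂P₁).toReal with ht1
  set t2 := (∫⁻ ω, j ω ∂P₂).toReal with ht2
  have hfin1 : ∫⁻ ω, j ω ∂P₁ ≠ ⊤ :=
    (lt_of_le_of_lt (hJQle P₁ inferInstance) (measure_lt_top μ Y)).ne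
  have hfin2 : ∫⁻ ω, j ω ∂P₂ ≠ ⊤ :=
    (lt_of_le_of_lt (hJQle P₂ inferInstance) (measure_lt_top μ Y)).ne
  have hJeq : J = κ * t1 + (1 - κ) * t2 := by
    rw [hjdef] at hdecJ
    rw [← hJdef, hdecJ, ENNReal.toReal_add
        (ENNReal.mul_ne_top ENNReal.ofReal_ne_top hfin1)
        (ENNReal.mul_ne_top ENNReal.ofReal_ne_top hfin2),
      ENNReal.toReal_mul, ENNReal.toReal_mul,
      ENNReal.toReal_ofReal hκ0.le, ENNReal.toReal_ofReal (by linarith : (0:ℝ) ≤ 1 - κ)]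
  have ht2nn : 0 ≤ t2 := ENNReal.toReal_nonneg
  have hkt1 : κ * t1 ≤ J := by
    rw [hJeq]
    nlinarith
  have ht1m : t1 ≤ m := by
    rw [hm, ht1]
    exact ENNReal.toReal_mono (measure_ne_top μ Y) (hJQle P₁ inferInstance)
  have hE : (expBoundary μ P₁ a Y).toReal = m - t1 := by
    rw [hexp P₁ inferInstance, ENNReal.toReal_sub_of_le (hJQle P₁ inferInstance)
      (measure_ne_top μ Y)]
  have key : m * (κ - ρ) / 2 ≤ κ * (expBoundary μ P₁ a Y).toReal := by
    rw [hE]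
    have h1 : κ * (m - t1) = κ * m - κ * t1 := by ring
    nlinarith [mul_le_mul_of_nonneg_left hmsmall hm0.le]
  rw [le_div_iff₀ hm0, ← mul_le_mul_iff_right₀ hκ0]
  calc κ * (1 / 2 * ((κ - ρ) / κ) * m) = m * (κ - ρ) / 2 := by
        field_simp
    _ ≤ κ * (expBoundary μ P₁ a Y).toReal := key
end

section
/- With λ = κλ₁ + (1−κ)λ₂, ρ = ρ⁺(λ) < κ as above, for every measurable Y with y = μ(Y) ∈ (0,1) one has the inequality e_{λ₁}(Y)/y ≥ (κ−ρ)/κ − y(1−ρ)/κ. In particular any λ₁-invariant set of positive measure has measure at least (κ−ρ)/(1−ρ). -/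
open MeasureTheory
open scoped ENNReal

section Aux

variable {X Ω : Type*} [MeasurableSpace X] [MeasurableSpace Ω]

lemma image_diff_measure_eq (μ : Measure X) (e : X ≃ᵐ X) (he : MeasurePreserving e μ μ)
    {Y : Set X} (hY : MeasurableSet Y) : μ (e '' Y \ Y) = μ (Y \ e ⁻¹' Y) := by
  have him : MeasurableSet (e '' Y) := by
    rw [e.image_eq_preimage_symm]; exact e.symm.measurable hY
  have hpre : e ⁻¹' (e '' Y \ Y) = Y \ e ⁻¹' Y := by
    ext x
    simp [Set.mem_diff, e.injective.mem_set_image]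
  rw [← hpre, he.measure_preimage (him.diff hY).nullMeasurableSet]

lemma meas_diff_measurable (μ : Measure X) [SFinite μ] {a : Ω → X ≃ᵐ X}
    (hj : Measurable fun p : Ω × X => (a p.1) p.2) {Y : Set X} (hY : MeasurableSet Y) :
    Measurable fun ω => μ (Y \ (a ω) ⁻¹' Y) := by
  have h1 : ∀ ω, μ (Y \ (a ω) ⁻¹' Y)
      = ∫⁻ x, Y.indicator (fun _ => (1 : ℝ≥0∞)) x
          * (Yᶜ).indicator (fun _ => (1 : ℝ≥0∞)) ((a ω) x) ∂μ := by
    intro ω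
    have hpt : ∀ x, (Y \ (a ω) ⁻¹' Y).indicator (fun _ => (1 : ℝ≥0∞)) x
        = Y.indicator (fun _ => (1 : ℝ≥0∞)) x
          * (Yᶜ).indicator (fun _ => (1 : ℝ≥0∞)) ((a ω) x) := by
      intro x
      by_cases hx : x ∈ Y <;> by_cases hax : (a ω) x ∈ Y <;>
        simp [Set.indicator_apply, hx, hax, Set.mem_diff]
    calc μ (Y \ (a ω) ⁻¹' Y)
        = ∫⁻ x, (Y \ (a ω) ⁻¹' Y).indicator (fun _ => (1 : ℝ≥0∞)) x ∂μ := by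
          rw [lintegral_indicator_const (hY.diff ((a ω).measurable hY)), one_mul]
      _ = _ := lintegral_congr hpt
  simp_rw [h1]
  exact Measurable.lintegral_prod_right
    (((measurable_const.indicator hY).comp measurable_snd).mul
      ((measurable_const.indicator hY.compl).comp hj))

lemma b_integrable (μ : Measure X) (Q : Measure Ω) [SFinite μ] [IsFiniteMeasure Q]
    [IsFiniteMeasure μ] {a : Ω → X ≃ᵐ X}
    (hj : Measurable fun p : Ω × X => (a p.1) p.2) {Y : Set X} (hY : MeasurableSet Y) :
    Integrable (fun ω => (μ (Y \ (a ω) ⁻¹' Y)).toReal) Q := by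
  refine ⟨((meas_diff_measurable μ hj hY).ennreal_toReal).aestronglyMeasurable,
    HasFiniteIntegral.of_bounded (C := (μ Y).toReal) (ae_of_all _ fun ω => ?_)⟩
  rw [Real.norm_eq_abs, abs_of_nonneg ENNReal.toReal_nonneg]
  exact ENNReal.toReal_mono (measure_ne_top μ Y) (measure_mono Set.diff_subset)

lemma expBoundary_toReal (μ : Measure X) (Q : Measure Ω) [SFinite μ] [IsFiniteMeasure μ]
    (a : Ω → X ≃ᵐ X) (ha : ∀ ω, MeasurePreserving (a ω) μ μ)
    (hj : Measurable fun p : Ω × X => (a p.1) p.2) {Y : Set X} (hY : MeasurableSet Y) :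
    (expBoundary μ Q a Y).toReal = ∫ ω, (μ (Y \ (a ω) ⁻¹' Y)).toReal ∂Q := by
  have h1 : expBoundary μ Q a Y = ∫⁻ ω, μ (Y \ (a ω) ⁻¹' Y) ∂Q :=
    lintegral_congr fun ω => image_diff_measure_eq μ (a ω) (ha ω) hY
  rw [h1]
  exact (integral_toReal (meas_diff_measurable μ hj hY).aemeasurable
    (ae_of_all _ fun ω => lt_of_le_of_lt (measure_mono Set.diff_subset)
      (measure_lt_top μ Y))).symm

lemma rho_bddAbove (μ : Measure X) (P : Measure Ω) (a : Ω → X ≃ᵐ X)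
    [IsProbabilityMeasure μ] [IsProbabilityMeasure P]
    (ha : ∀ ω, MeasurePreserving (a ω) μ μ) :
    BddAbove { r : ℝ | ∃ f : X → ℝ, MemLp f 2 μ ∧ (∫ x, f x ∂μ) = 0 ∧
      (∫ x, f x ^ 2 ∂μ) ≠ 0 ∧
      r = (∫ ω, (∫ x, f ((a ω) x) * f x ∂μ) ∂P) / (∫ x, f x ^ 2 ∂μ) } := by
  refine ⟨1, fun r hr => ?_⟩
  obtain ⟨f, hf2, -, hD, hr⟩ := hr
  have hDpos : 0 < ∫ x, f x ^ 2 ∂μ :=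
    lt_of_le_of_ne (integral_nonneg fun x => sq_nonneg _) (Ne.symm hD)
  rw [hr, div_le_one hDpos]
  have key : ∀ ω, |∫ x, f ((a ω) x) * f x ∂μ| ≤ ∫ x, f x ^ 2 ∂μ := by
    intro ω
    have hfa : MemLp (fun x => f ((a ω) x)) 2 μ := hf2.comp_measurePreserving (ha ω)
    have hsq : ∫ x, f ((a ω) x) ^ 2 ∂μ = ∫ x, f x ^ 2 ∂μ :=
      (ha ω).integral_comp (a ω).measurableEmbedding (fun x => f x ^ 2)
    have hbound : Integrable (fun x => (f ((a ω) x) ^ 2 + f x ^ 2) / 2) μ :=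
      (hfa.integrable_sq.add hf2.integrable_sq).div_const 2
    have hboundval : ∫ x, (f ((a ω) x) ^ 2 + f x ^ 2) / 2 ∂μ = ∫ x, f x ^ 2 ∂μ := by
      rw [integral_div, integral_add hfa.integrable_sq hf2.integrable_sq, hsq]; ring
    have hint : Integrable (fun x => f ((a ω) x) * f x) μ := by
      refine hbound.mono' (hfa.aestronglyMeasurable.mul hf2.aestronglyMeasurable)
        (ae_of_all _ fun x => ?_)
      rw [Real.norm_eq_abs, abs_mul]
      nlinarith [sq_nonneg (|f ((a ω) x)| - |f x|), sq_abs (f ((a ω) x)), sq_abs (f x)]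
    rw [abs_le]
    constructor
    · have h := integral_mono hbound.neg hint (fun x => by
        simp only [Pi.neg_apply]; nlinarith [sq_nonneg (f ((a ω) x) + f x)])
      simp only [Pi.neg_apply] at h
      rw [integral_neg, hboundval] at h
      exact h
    · have h := integral_mono hint hbound (fun x => by dsimp; nlinarith [sq_nonneg (f ((a ω) x) - f x)])
      rwa [hboundval] at h
  calc ∫ ω, (∫ x, f ((a ω) x) * f x ∂μ) ∂P
      ≤ |∫ ω, (∫ x, f ((a ω) x) * f x ∂μ) ∂P| := le_abs_self _
    _ ≤ (∫ x, f x ^ 2 ∂μ) * (P Set.univ).toReal := by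
        have h := norm_integral_le_of_norm_le_const (μ := P)
          (C := ∫ x, f x ^ 2 ∂μ) (f := fun ω => ∫ x, f ((a ω) x) * f x ∂μ)
          (ae_of_all _ fun ω => by rw [Real.norm_eq_abs]; exact key ω)
        simpa [Real.norm_eq_abs] using h
    _ = ∫ x, f x ^ 2 ∂μ := by simp

lemma quotient_bound (μ : Measure X) (P : Measure Ω) (a : Ω → X ≃ᵐ X)
    [IsProbabilityMeasure μ] [IsProbabilityMeasure P]
    (ha : ∀ ω, MeasurePreserving (a ω) μ μ)
    (hj : Measurable fun p : Ω × X => (a p.1) p.2)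
    {Y : Set X} (hY : MeasurableSet Y) (hy0 : 0 < μ Y) (hy1 : μ Y < 1) :
    ((μ Y).toReal - (μ Y).toReal ^ 2) - ∫ ω, (μ (Y \ (a ω) ⁻¹' Y)).toReal ∂P
      ≤ rhoPlus μ P a * ((μ Y).toReal - (μ Y).toReal ^ 2) := by
  have hyt : μ Y ≠ ⊤ := measure_ne_top μ Y
  set y := (μ Y).toReal with hydef
  have hy0' : 0 < y := ENNReal.toReal_pos hy0.ne' hyt
  have hy1' : y < 1 := by
    have := (ENNReal.toReal_lt_toReal hyt ENNReal.one_ne_top).mpr hy1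
    simpa using this
  set f : X → ℝ := fun x => Y.indicator (fun _ => (1 : ℝ)) x - y with hfdef
  have hf_meas : Measurable f := (measurable_const.indicator hY).sub measurable_const
  have hf2 : MemLp f 2 μ := by
    refine MemLp.of_bound hf_meas.aestronglyMeasurable 1 (ae_of_all _ fun x => ?_)
    rw [Real.norm_eq_abs, abs_le]
    by_cases hx : x ∈ Y <;> simp [hfdef, Set.indicator_apply, hx] <;> constructor <;> linarith
  have hmean : ∫ x, f x ∂μ = 0 := by
    rw [hfdef]
    rw [integral_sub ((integrable_const (1 : ℝ)).indicator hY) (integrable_const y),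
      integral_indicator_const _ hY, integral_const]
    simp [hydef, Measure.real]
  have hsq : ∫ x, f x ^ 2 ∂μ = y - y ^ 2 := by
    have hpt : ∀ x, f x ^ 2 = Y.indicator (fun _ => 1 - 2 * y) x + y ^ 2 := by
      intro x
      by_cases hx : x ∈ Y <;> simp [hfdef, Set.indicator_apply, hx] <;> ring
    rw [integral_congr_ae (ae_of_all μ hpt),
      integral_add ((integrable_const _).indicator hY) (integrable_const _),
      integral_indicator_const _ hY, integral_const]
    simp [hydef, Measure.real]; ring
  have hc : 0 < y - y ^ 2 := by nlinarith
  have hne : ∫ x, f x ^ 2 ∂μ ≠ 0 := by rw [hsq]; exact hc.ne'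
  have hinner : ∀ ω, ∫ x, f ((a ω) x) * f x ∂μ
      = (y - y ^ 2) - (μ (Y \ (a ω) ⁻¹' Y)).toReal := by
    intro ω
    have hAm : MeasurableSet ((a ω) ⁻¹' Y) := (a ω).measurable hY
    have hpt : ∀ x, f ((a ω) x) * f x
        = ((a ω) ⁻¹' Y ∩ Y).indicator (fun _ => (1 : ℝ)) x
          - ((a ω) ⁻¹' Y).indicator (fun _ => y) x
          - Y.indicator (fun _ => y) x + y ^ 2 := by
      intro x
      by_cases h1 : (a ω) x ∈ Y <;> by_cases h2 : x ∈ Y <;>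
        simp [hfdef, Set.indicator_apply, Set.mem_preimage, h1, h2, Set.mem_inter_iff] <;> ring
    rw [integral_congr_ae (ae_of_all μ hpt)]
    have hi1 : Integrable (fun x => ((a ω) ⁻¹' Y ∩ Y).indicator (fun _ => (1 : ℝ)) x) μ :=
      (integrable_const _).indicator (hAm.inter hY)
    have hi2 : Integrable (fun x => ((a ω) ⁻¹' Y).indicator (fun _ => y) x) μ :=
      (integrable_const _).indicator hAm
    have hi3 : Integrable (fun x => Y.indicator (fun _ => y) x) μ :=
      (integrable_const _).indicator hY
    have hi12 : Integrable (fun x => ((a ω) ⁻¹' Y ∩ Y).indicator (fun _ => (1 : ℝ)) x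
        - ((a ω) ⁻¹' Y).indicator (fun _ => y) x) μ := by exact hi1.sub hi2
    have hi123 : Integrable (fun x => ((a ω) ⁻¹' Y ∩ Y).indicator (fun _ => (1 : ℝ)) x
        - ((a ω) ⁻¹' Y).indicator (fun _ => y) x - Y.indicator (fun _ => y) x) μ := by
      exact hi12.sub hi3
    rw [integral_add hi123 (integrable_const _), integral_sub hi12 hi3,
      integral_sub hi1 hi2,
      integral_indicator_const _ (hAm.inter hY), integral_indicator_const _ hAm,
      integral_indicator_const _ hY, integral_const]
    have hApre : μ ((a ω) ⁻¹' Y) = μ Y := (ha ω).measure_preimage hY.nullMeasurableSet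
    have hsplit : μ (Y ∩ (a ω) ⁻¹' Y) + μ (Y \ (a ω) ⁻¹' Y) = μ Y :=
      measure_inter_add_diff Y hAm
    have hfin1 : μ (Y ∩ (a ω) ⁻¹' Y) ≠ ⊤ := measure_ne_top _ _
    have hfin2 : μ (Y \ (a ω) ⁻¹' Y) ≠ ⊤ := measure_ne_top _ _
    have htr : (μ (Y ∩ (a ω) ⁻¹' Y)).toReal + (μ (Y \ (a ω) ⁻¹' Y)).toReal = y := by
      rw [← ENNReal.toReal_add hfin1 hfin2, hsplit]
    rw [Set.inter_comm] at htr
    simp only [Measure.real, smul_eq_mul, hApre, measure_univ, ENNReal.toReal_one, ← hydef]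
    nlinarith [htr]
  have hbint : Integrable (fun ω => (μ (Y \ (a ω) ⁻¹' Y)).toReal) P :=
    b_integrable μ P hj hY
  have hmem : ((∫ ω, (∫ x, f ((a ω) x) * f x ∂μ) ∂P) / (∫ x, f x ^ 2 ∂μ))
      ∈ { r : ℝ | ∃ f : X → ℝ, MemLp f 2 μ ∧ (∫ x, f x ∂μ) = 0 ∧
        (∫ x, f x ^ 2 ∂μ) ≠ 0 ∧
        r = (∫ ω, (∫ x, f ((a ω) x) * f x ∂μ) ∂P) / (∫ x, f x ^ 2 ∂μ) } :=
    ⟨f, hf2, hmean, hne, rfl⟩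
  have hle : (∫ ω, (∫ x, f ((a ω) x) * f x ∂μ) ∂P) / (∫ x, f x ^ 2 ∂μ)
      ≤ rhoPlus μ P a := le_csSup (rho_bddAbove μ P a ha) hmem
  rw [hsq, div_le_iff₀ hc] at hle
  have hiv : ∫ ω, (∫ x, f ((a ω) x) * f x ∂μ) ∂P
      = (y - y ^ 2) - ∫ ω, (μ (Y \ (a ω) ⁻¹' Y)).toReal ∂P := by
    rw [integral_congr_ae (ae_of_all P hinner), integral_sub (integrable_const _) hbint,
      integral_const]
    simp
  rw [hiv] at hle
  linarith

end Aux

theorem expansion_inequality_and_invariant_bound {X Ω : Type*} [MeasurableSpace X]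
    [MeasurableSpace Ω] (μ : Measure X) (P P₁ P₂ : Measure Ω) (a : Ω → X ≃ᵐ X)
    [IsProbabilityMeasure μ] [IsProbabilityMeasure P]
    [IsProbabilityMeasure P₁] [IsProbabilityMeasure P₂]
    (ha : ∀ ω, MeasurePreserving (a ω) μ μ)
    (hj : Measurable fun p : Ω × X => (a p.1) p.2)
    (κ : ℝ) (hκ1 : κ ≤ 1)
    (hρ : rhoPlus μ P a < κ)
    (hdec : P = ENNReal.ofReal κ • P₁ + ENNReal.ofReal (1 - κ) • P₂) :
    (∀ Y : Set X, MeasurableSet Y → 0 < μ Y → μ Y < 1 →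
      (κ - rhoPlus μ P a) / κ - (μ Y).toReal * ((1 - rhoPlus μ P a) / κ) ≤
        (expBoundary μ P₁ a Y).toReal / (μ Y).toReal) ∧
    (∀ Y : Set X, MeasurableSet Y → 0 < μ Y → expBoundary μ P₁ a Y = 0 →
      ENNReal.ofReal ((κ - rhoPlus μ P a) / (1 - rhoPlus μ P a)) ≤ μ Y) := by
  set ρ := rhoPlus μ P a with hρdef
  have hκ0 : 0 ≤ κ := by
    by_contra h
    push_neg at h
    have h2 := congrArg (fun m : Measure Ω => m Set.univ) hdec
    simp [Measure.add_apply, Measure.smul_apply, measure_univ, smul_eq_mul,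
      ENNReal.ofReal_eq_zero.mpr h.le] at h2
    have hlt : (1 : ℝ≥0∞) < ENNReal.ofReal (1 - κ) := by
      rw [← ENNReal.ofReal_one]
      exact (ENNReal.ofReal_lt_ofReal_iff (by linarith)).mpr (by linarith)
    rw [← h2] at hlt
    exact lt_irrefl _ hlt
  have claim : ∀ Y : Set X, MeasurableSet Y → 0 < μ Y → μ Y < 1 →
      ((μ Y).toReal * (κ - ρ) - (μ Y).toReal ^ 2 * (1 - ρ)
        ≤ κ * (expBoundary μ P₁ a Y).toReal) ∧
      (-((μ Y).toReal ^ 2) ≤ ρ * ((μ Y).toReal - (μ Y).toReal ^ 2)) := by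
    intro Y hY hy0 hy1
    have hyt : μ Y ≠ ⊤ := measure_ne_top μ Y
    set y := (μ Y).toReal with hydef
    have hy0' : 0 < y := ENNReal.toReal_pos hy0.ne' hyt
    have hy1' : y < 1 := by
      have := (ENNReal.toReal_lt_toReal hyt ENNReal.one_ne_top).mpr hy1
      simpa using this
    set b : Ω → ℝ := fun ω => (μ (Y \ (a ω) ⁻¹' Y)).toReal with hbdef
    have hble : ∀ ω, b ω ≤ y := fun ω =>
      ENNReal.toReal_mono hyt (measure_mono Set.diff_subset)
    have hQ := quotient_bound μ P a ha hj hY hy0 hy1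
    have hbP : Integrable b P := b_integrable μ P hj hY
    have hbP1 : Integrable b P₁ := b_integrable μ P₁ hj hY
    have hbP2 : Integrable b P₂ := b_integrable μ P₂ hj hY
    have hsplit : ∫ ω, b ω ∂P = κ * ∫ ω, b ω ∂P₁ + (1 - κ) * ∫ ω, b ω ∂P₂ := by
      have h1 : ∫ ω, b ω ∂P
          = ∫ ω, b ω ∂(ENNReal.ofReal κ • P₁ + ENNReal.ofReal (1 - κ) • P₂) := by
        rw [← hdec]
      have hbadd : Integrable b (ENNReal.ofReal κ • P₁ + ENNReal.ofReal (1 - κ) • P₂) :=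
        hdec ▸ hbP
      rw [h1, integral_add_measure hbadd.left_of_add_measure hbadd.right_of_add_measure,
        integral_smul_measure, integral_smul_measure,
        ENNReal.toReal_ofReal hκ0, ENNReal.toReal_ofReal (by linarith : (0:ℝ) ≤ 1 - κ)]
      simp [smul_eq_mul]
    have hbound2 : ∫ ω, b ω ∂P₂ ≤ y := by
      calc ∫ ω, b ω ∂P₂ ≤ ∫ _, y ∂P₂ := integral_mono hbP2 (integrable_const y) hble
        _ = y := by simp
    have hboundP : ∫ ω, b ω ∂P ≤ y := by
      calc ∫ ω, b ω ∂P ≤ ∫ _, y ∂P := integral_mono hbP (integrable_const y) hble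
        _ = y := by simp
    have he1 : (expBoundary μ P₁ a Y).toReal = ∫ ω, b ω ∂P₁ :=
      expBoundary_toReal μ P₁ a ha hj hY
    constructor
    · rw [he1]
      have hκ1' : (0:ℝ) ≤ 1 - κ := by linarith
      have h2 : ∫ ω, b ω ∂P ≤ κ * ∫ ω, b ω ∂P₁ + (1 - κ) * y := by
        rw [hsplit]
        have := mul_le_mul_of_nonneg_left hbound2 hκ1'
        linarith
      nlinarith [hQ, h2]
    · nlinarith [hQ, hboundP]
  constructor
  · intro Y hY hy0 hy1
    by_cases hκ : κ = 0
    · rw [hκ]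
      simp only [div_zero, zero_sub, neg_zero, mul_zero, sub_zero]
      positivity
    · have hκpos : 0 < κ := lt_of_le_of_ne hκ0 (Ne.symm hκ)
      obtain ⟨h1, -⟩ := claim Y hY hy0 hy1
      have hyt : μ Y ≠ ⊤ := measure_ne_top μ Y
      have hy0' : 0 < (μ Y).toReal := ENNReal.toReal_pos hy0.ne' hyt
      rw [show (κ - ρ) / κ - (μ Y).toReal * ((1 - ρ) / κ)
          = ((μ Y).toReal * (κ - ρ) - (μ Y).toReal ^ 2 * (1 - ρ)) / (κ * (μ Y).toReal) by
        field_simp]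
      rw [div_le_div_iff₀ (by positivity) hy0']
      nlinarith [h1, hy0']
  · intro Y hY hy0 hzero
    rcases lt_or_ge (μ Y) 1 with hy1 | hy1
    · obtain ⟨h1, h2⟩ := claim Y hY hy0 hy1
      rw [hzero, ENNReal.toReal_zero, mul_zero] at h1
      have hyt : μ Y ≠ ⊤ := measure_ne_top μ Y
      have hy0' : 0 < (μ Y).toReal := ENNReal.toReal_pos hy0.ne' hyt
      have hρ1 : ρ < 1 := lt_of_lt_of_le hρ hκ1
      have hgoal' : (κ - ρ) / (1 - ρ) ≤ (μ Y).toReal := by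
        rw [div_le_iff₀ (by linarith : (0:ℝ) < 1 - ρ)]
        by_cases hκ : κ = 0
        · rw [hκ]
          nlinarith [h2, hy0']
        · have hκpos : 0 < κ := lt_of_le_of_ne hκ0 (Ne.symm hκ)
          nlinarith [h1, hy0']
      exact ENNReal.ofReal_le_of_le_toReal hgoal'
    · have hρ1 : ρ < 1 := lt_of_lt_of_le hρ hκ1
      have hle1 : (κ - ρ) / (1 - ρ) ≤ 1 := by
        rw [div_le_one (by linarith)]; linarith
      calc ENNReal.ofReal ((κ - ρ) / (1 - ρ)) ≤ ENNReal.ofReal 1 :=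
            ENNReal.ofReal_le_ofReal hle1
        _ = 1 := ENNReal.ofReal_one
        _ ≤ μ Y := hy1
end

section
/- Let λ be a Borel probability measure on Aut(X,μ), κ > ρ⁺(λ) = ρ, and λ = κλ₁ + (1−κ)λ₂. Then X decomposes into at most (1−ρ)/(κ−ρ) pairwise disjoint λ₁-ergodic measurable sets of positive measure. In particular, λ₁ has at most finitely many ergodic components. -/
open MeasureTheory
open scoped ENNReal

/-- `Y` is `λ₁`-invariant: `e_{λ₁}(Y) = 0`. -/
def IsInvariantSet {X Ω : Type*} [MeasurableSpace X] [MeasurableSpace Ω]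
    (μ : Measure X) (P₁ : Measure Ω) (a : Ω → X ≃ᵐ X) (Y : Set X) : Prop :=
  expBoundary μ P₁ a Y = 0

/-- `Y` is `λ₁`-ergodic: it is `λ₁`-invariant and every `λ₁`-invariant measurable
subset of `Y` is null or conull in `Y`. -/
def IsErgodicSet {X Ω : Type*} [MeasurableSpace X] [MeasurableSpace Ω]
    (μ : Measure X) (P₁ : Measure Ω) (a : Ω → X ≃ᵐ X) (Y : Set X) : Prop :=
  IsInvariantSet μ P₁ a Y ∧
    ∀ Z : Set X, Z ⊆ Y → MeasurableSet Z → IsInvariantSet μ P₁ a Z →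
      μ Z = 0 ∨ μ (Y \ Z) = 0

set_option linter.unusedSectionVars false
section
open MeasureTheory
open scoped ENNReal
variable {X Ω : Type*} [MeasurableSpace X] [MeasurableSpace Ω]
  {μ : Measure X} {P₁ : Measure Ω} {a : Ω → X ≃ᵐ X}

lemma boundary_eq [IsFiniteMeasure μ] (ha : ∀ ω, MeasurePreserving (a ω) μ μ) {Z : Set X}
    (hZ : MeasurableSet Z) (ω : Ω) :
    μ ((a ω) '' Z \ Z) = μ Z - μ ((fun x => a ω x) ⁻¹' Z ∩ Z) := by
  set W : Set X := (a ω) '' Z with hWdef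
  have hWp : W = (a ω).symm ⁻¹' Z := by
    ext x; simp [hWdef, MeasurableEquiv.image_eq_preimage_symm]
  have hWmeas : MeasurableSet W := hWp ▸ (a ω).symm.measurable hZ
  have hWZ : μ W = μ Z := by
    rw [hWp]; exact ((ha ω).symm (a ω)).measure_preimage hZ.nullMeasurableSet
  have hkey : μ (W \ Z) + μ (W ∩ Z) = μ W := measure_diff_add_inter W hZ
  have hpre : (fun x => a ω x) ⁻¹' (W ∩ Z) = Z ∩ (fun x => a ω x) ⁻¹' Z := by
    rw [Set.preimage_inter]
    congr 1
    rw [hWdef]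
    exact Set.preimage_image_eq _ (a ω).injective
  have hWZint : μ (W ∩ Z) = μ ((fun x => a ω x) ⁻¹' Z ∩ Z) := by
    rw [← (ha ω).measure_preimage (hWmeas.inter hZ).nullMeasurableSet, hpre, Set.inter_comm]
  rw [hWZint, hWZ] at hkey
  exact ENNReal.eq_sub_of_add_eq (measure_ne_top μ _) hkey

lemma meas_inter (hj : Measurable fun p : Ω × X => (a p.1) p.2) {Z : Set X}
    (hZ : MeasurableSet Z) [SFinite μ] :
    Measurable fun ω => μ ((fun x => a ω x) ⁻¹' Z ∩ Z) := by
  have hE : MeasurableSet {p : Ω × X | a p.1 p.2 ∈ Z ∧ p.2 ∈ Z} :=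
    (hj hZ).inter (measurable_snd hZ)
  have h := measurable_measure_prodMk_left (ν := μ) hE
  have heq : (fun ω => μ ((fun x => a ω x) ⁻¹' Z ∩ Z))
      = fun ω => μ (Prod.mk ω ⁻¹' {p : Ω × X | a p.1 p.2 ∈ Z ∧ p.2 ∈ Z}) := by
    funext ω
    congr 1
  rw [heq]
  exact h

lemma boundary_measurable [IsFiniteMeasure μ] (ha : ∀ ω, MeasurePreserving (a ω) μ μ)
    (hj : Measurable fun p : Ω × X => (a p.1) p.2) {Z : Set X} (hZ : MeasurableSet Z) :
    Measurable fun ω => μ ((a ω) '' Z \ Z) := by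
  have : (fun ω => μ ((a ω) '' Z \ Z))
      = fun ω => μ Z - μ ((fun x => a ω x) ⁻¹' Z ∩ Z) := funext fun ω => boundary_eq ha hZ ω
  rw [this]
  exact measurable_const.sub (meas_inter hj hZ)

lemma isInvariant_iff_ae [IsFiniteMeasure μ] (ha : ∀ ω, MeasurePreserving (a ω) μ μ)
    (hj : Measurable fun p : Ω × X => (a p.1) p.2) {Z : Set X} (hZ : MeasurableSet Z) :
    IsInvariantSet μ P₁ a Z ↔ ∀ᵐ ω ∂P₁, μ ((a ω) '' Z \ Z) = 0 := by
  unfold IsInvariantSet expBoundary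
  rw [lintegral_eq_zero_iff (boundary_measurable ha hj hZ)]
  exact Iff.rfl

lemma null_diff_symm [IsFiniteMeasure μ] (ha : ∀ ω, MeasurePreserving (a ω) μ μ) {Z : Set X}
    (hZ : MeasurableSet Z) (ω : Ω) (h0 : μ ((a ω) '' Z \ Z) = 0) :
    μ (Z \ (a ω) '' Z) = 0 := by
  set W : Set X := (a ω) '' Z with hWdef
  have hWp : W = (a ω).symm ⁻¹' Z := by
    ext x; simp [hWdef, MeasurableEquiv.image_eq_preimage_symm]
  have hWmeas : MeasurableSet W := hWp ▸ (a ω).symm.measurable hZ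
  have hWZ : μ W = μ Z := by
    rw [hWp]; exact ((ha ω).symm (a ω)).measure_preimage hZ.nullMeasurableSet
  have h1 : μ (W \ Z) + μ (W ∩ Z) = μ W := measure_diff_add_inter W hZ
  have h2 : μ (Z \ W) + μ (Z ∩ W) = μ Z := measure_diff_add_inter Z hWmeas
  rw [h0, zero_add] at h1
  rw [Set.inter_comm] at h2
  rw [← hWZ, ← h1, add_comm] at h2
  exact (ENNReal.add_right_inj (measure_ne_top μ _)).mp (h2.trans (add_zero _).symm)

lemma invariant_univ : IsInvariantSet μ P₁ a Set.univ := by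
  unfold IsInvariantSet expBoundary
  simp

lemma invariant_diff [IsFiniteMeasure μ] (ha : ∀ ω, MeasurePreserving (a ω) μ μ)
    (hj : Measurable fun p : Ω × X => (a p.1) p.2) {Y Z : Set X}
    (hY : MeasurableSet Y) (hZ : MeasurableSet Z)
    (hYi : IsInvariantSet μ P₁ a Y) (hZi : IsInvariantSet μ P₁ a Z) :
    IsInvariantSet μ P₁ a (Y \ Z) := by
  rw [isInvariant_iff_ae ha hj hY] at hYi
  rw [isInvariant_iff_ae ha hj hZ] at hZi
  rw [isInvariant_iff_ae ha hj (hY.diff hZ)]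
  filter_upwards [hYi, hZi] with ω h1 h2
  have h2' : μ (Z \ (a ω) '' Z) = 0 := null_diff_symm ha hZ ω h2
  refine measure_mono_null ?_ (measure_union_null h1 h2')
  intro x hx
  rw [Set.image_diff (a ω).injective] at hx
  obtain ⟨⟨hxY, hxZ⟩, hx2⟩ := hx
  by_cases hxy : x ∈ Y
  · right
    exact ⟨by_contra fun h => hx2 ⟨hxy, h⟩, hxZ⟩
  · left
    exact ⟨hxY, hxy⟩
end
section
open MeasureTheory
open scoped ENNReal
variable {X Ω : Type*} [MeasurableSpace X] [MeasurableSpace Ω]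
  {μ : Measure X} {P P₁ P₂ : Measure Ω} {a : Ω → X ≃ᵐ X}

lemma kappa_nonneg [IsProbabilityMeasure P] [IsProbabilityMeasure P₁] [IsProbabilityMeasure P₂]
    {κ : ℝ} (hdec : P = ENNReal.ofReal κ • P₁ + ENNReal.ofReal (1 - κ) • P₂) : 0 ≤ κ := by
  by_contra h
  push_neg at h
  have h1 : P Set.univ = 1 := measure_univ
  rw [hdec] at h1
  simp only [Measure.add_apply, Measure.smul_apply, measure_univ, smul_eq_mul, mul_one] at h1
  rw [ENNReal.ofReal_eq_zero.mpr h.le, zero_add] at h1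
  have hlt : (1:ℝ≥0∞) < ENNReal.ofReal (1 - κ) := by
    rw [← ENNReal.ofReal_one]
    exact (ENNReal.ofReal_lt_ofReal_iff (by linarith)).mpr (by linarith)
  rw [h1] at hlt
  exact lt_irrefl _ hlt

lemma two_eq_ofReal : (2:ℝ≥0∞) = ENNReal.ofReal (2:ℝ) := by
  rw [ENNReal.ofReal_ofNat]

lemma inner_bound [IsProbabilityMeasure μ] (ha : ∀ ω, MeasurePreserving (a ω) μ μ)
    {f : X → ℝ} (hf : MemLp f 2 μ) (ω : Ω) :
    ‖∫ x, f (a ω x) * f x ∂μ‖ ≤ ∫ x, f x ^ 2 ∂μ := by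
  set Q := ∫ x, f x ^ 2 ∂μ with hQdef
  have hQ0 : 0 ≤ Q := integral_nonneg fun x => sq_nonneg _
  have hg : MemLp (fun x => f (a ω x)) 2 μ := hf.comp_measurePreserving (ha ω)
  have hpq : (2:ℝ).HolderConjugate 2 := ⟨by norm_num, by norm_num, by norm_num⟩
  have hnorm2 : ∀ y : ℝ, ‖y‖ ^ (2:ℝ) = y ^ 2 := fun y => by
    rw [show ((2:ℝ)) = ((2:ℕ):ℝ) by norm_num, Real.rpow_natCast]
    rw [Real.norm_eq_abs, sq_abs]
  have hcomp : ∫ x, f (a ω x) ^ 2 ∂μ = Q := by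
    rw [hQdef]
    exact (ha ω).integral_comp (a ω).measurableEmbedding fun y => f y ^ 2
  calc ‖∫ x, f (a ω x) * f x ∂μ‖ ≤ ∫ x, ‖f (a ω x) * f x‖ ∂μ := norm_integral_le_integral_norm _
    _ = ∫ x, ‖f (a ω x)‖ * ‖f x‖ ∂μ := by
        congr 1; funext x; exact norm_mul _ _
    _ ≤ (∫ x, ‖f (a ω x)‖ ^ (2:ℝ) ∂μ) ^ (1/(2:ℝ)) * (∫ x, ‖f x‖ ^ (2:ℝ) ∂μ) ^ (1/(2:ℝ)) :=
        integral_mul_norm_le_Lp_mul_Lq hpq (two_eq_ofReal ▸ hg) (two_eq_ofReal ▸ hf)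
    _ = Q ^ (1/(2:ℝ)) * Q ^ (1/(2:ℝ)) := by
        congr 2
        · rw [show (fun x => ‖f (a ω x)‖ ^ (2:ℝ)) = fun x => f (a ω x) ^ 2 from
            funext fun x => hnorm2 _]
          exact hcomp
        · rw [show (fun x => ‖f x‖ ^ (2:ℝ)) = fun x => f x ^ 2 from funext fun x => hnorm2 _]
    _ = Q := by
        rw [← Real.rpow_add' hQ0 (by norm_num)]
        norm_num

lemma bddAbove_spectrum [IsProbabilityMeasure μ] [IsProbabilityMeasure P]
    (ha : ∀ ω, MeasurePreserving (a ω) μ μ) :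
    BddAbove { r : ℝ | ∃ f : X → ℝ, MemLp f 2 μ ∧ (∫ x, f x ∂μ) = 0 ∧
      (∫ x, f x ^ 2 ∂μ) ≠ 0 ∧
      r = (∫ ω, (∫ x, f ((a ω) x) * f x ∂μ) ∂P) / (∫ x, f x ^ 2 ∂μ) } := by
  refine ⟨1, fun r hr => ?_⟩
  obtain ⟨f, hf, _, hQne, hreq⟩ := hr
  set Q := ∫ x, f x ^ 2 ∂μ with hQdef
  have hQpos : 0 < Q := lt_of_le_of_ne (integral_nonneg fun x => sq_nonneg _) (Ne.symm hQne)
  have houter : ‖∫ ω, (∫ x, f ((a ω) x) * f x ∂μ) ∂P‖ ≤ Q := by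
    have := norm_integral_le_of_norm_le_const (μ := P)
      (f := fun ω => ∫ x, f ((a ω) x) * f x ∂μ) (C := Q)
      (Filter.Eventually.of_forall fun ω => inner_bound ha hf ω)
    simpa using this
  rw [hreq, div_le_one hQpos]
  exact le_trans (le_abs_self _) houter
end
section
open MeasureTheory
open scoped ENNReal
variable {X Ω : Type*} [MeasurableSpace X] [MeasurableSpace Ω]
  {μ : Measure X} {P P₁ P₂ : Measure Ω} {a : Ω → X ≃ᵐ X}

lemma invariant_measure_ge [IsProbabilityMeasure μ] [IsProbabilityMeasure P]
    [IsProbabilityMeasure P₁] [IsProbabilityMeasure P₂]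
    (ha : ∀ ω, MeasurePreserving (a ω) μ μ)
    (hj : Measurable fun p : Ω × X => (a p.1) p.2)
    {κ : ℝ} (hκ1 : κ ≤ 1) (hρ : rhoPlus μ P a < κ)
    (hdec : P = ENNReal.ofReal κ • P₁ + ENNReal.ofReal (1 - κ) • P₂)
    {Z : Set X} (hZ : MeasurableSet Z) (hinv : IsInvariantSet μ P₁ a Z) (hpos : μ Z ≠ 0) :
    ENNReal.ofReal ((κ - rhoPlus μ P a) / (1 - rhoPlus μ P a)) ≤ μ Z := by
  set ρ := rhoPlus μ P a with hρdef
  have hκ0 : 0 ≤ κ := kappa_nonneg hdec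
  have h1ρ : 0 < 1 - ρ := by linarith
  set m := (μ Z).toReal with hmdef
  have hμfin : μ Z ≠ ⊤ := measure_ne_top μ Z
  have hm0 : 0 < m := ENNReal.toReal_pos hpos hμfin
  have hm1 : m ≤ 1 := by
    simpa using ENNReal.toReal_mono ENNReal.one_ne_top prob_le_one
  suffices hsuff : (κ - ρ) / (1 - ρ) ≤ m by
    calc ENNReal.ofReal ((κ - ρ) / (1 - ρ)) ≤ ENNReal.ofReal m :=
          ENNReal.ofReal_le_ofReal hsuff
      _ = μ Z := ENNReal.ofReal_toReal hμfin
  by_cases hm1' : m = 1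
  · rw [hm1']
    exact (div_le_one h1ρ).mpr (by linarith)
  have hmlt : m < 1 := lt_of_le_of_ne hm1 hm1'
  -- the test function
  set g : X → ℝ := Z.indicator (fun _ => (1:ℝ)) with hgdef
  have hgmeas : Measurable g := measurable_const.indicator hZ
  have hgint : Integrable g μ := (integrable_const (1:ℝ)).indicator hZ
  have hgval : ∀ x, g x = 0 ∨ g x = 1 := fun x => by
    by_cases hx : x ∈ Z
    · right; simp [hgdef, hx]
    · left; simp [hgdef, hx]
  have hgI : ∫ x, g x ∂μ = m := by
    rw [hgdef, integral_indicator_const (1:ℝ) hZ]; simp [hmdef, Measure.real]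
  set f : X → ℝ := fun x => g x - m with hfdef
  have hfmem : MemLp f 2 μ := by
    refine MemLp.of_bound ((hgmeas.sub measurable_const).aestronglyMeasurable) (1 + |m|)
      (Filter.Eventually.of_forall fun x => ?_)
    have h1 : ‖f x‖ ≤ ‖g x‖ + ‖m‖ := norm_sub_le _ _
    have hg1 : ‖g x‖ ≤ 1 := by rcases hgval x with h | h <;> simp [h]
    simp only [Real.norm_eq_abs] at h1 hg1 ⊢
    linarith
  have hf0 : ∫ x, f x ∂μ = 0 := by
    rw [hfdef]
    rw [integral_sub hgint (integrable_const m), hgI, integral_const]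
    simp
  have hQval : ∫ x, f x ^ 2 ∂μ = m - m ^ 2 := by
    have hfsq : (fun x => f x ^ 2) = fun x => (1 - 2*m) * g x + m ^ 2 := by
      funext x
      rcases hgval x with h | h <;> simp [hfdef, h] <;> ring
    rw [hfsq, integral_add (hgint.const_mul _) (integrable_const _), integral_const_mul, hgI,
      integral_const]
    simp; ring
  have hQpos : 0 < m - m ^ 2 := by nlinarith
  -- the spectral test value
  set G : Ω → ℝ := fun ω => ∫ x, f (a ω x) * f x ∂μ with hGdef
  have hGform : ∀ ω, G ω = (μ ((fun x => a ω x) ⁻¹' Z ∩ Z)).toReal - m ^ 2 := by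
    intro ω
    set W : Set X := (fun x => a ω x) ⁻¹' Z with hWdef
    have hWmeas : MeasurableSet W := (a ω).measurable hZ
    have hWm : (μ W).toReal = m := by
      rw [hWdef, (ha ω).measure_preimage hZ.nullMeasurableSet]
    have hWval : ∀ x, W.indicator (fun _ => (1:ℝ)) x = g (a ω x) := fun x => by
      by_cases hx : a ω x ∈ Z <;>
        simp [hgdef, hWdef, hx, Set.indicator_apply, Set.mem_preimage]
    have hpt : (fun x => f (a ω x) * f x) = fun x =>
        (W ∩ Z).indicator (fun _ => (1:ℝ)) x +
          ((-m) * W.indicator (fun _ => (1:ℝ)) x + ((-m) * g x + m * m)) := by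
      funext x
      have h1 : (W ∩ Z).indicator (fun _ => (1:ℝ)) x
          = W.indicator (fun _ => (1:ℝ)) x * g x := by
        by_cases hxW : x ∈ W <;> by_cases hxZ : x ∈ Z <;>
          simp [Set.indicator_apply, hxW, hxZ, hgdef]
      rw [h1, hWval x, hfdef]
      ring
    rw [hGdef]
    simp only []
    rw [hpt]
    have i1 : Integrable (fun x => (W ∩ Z).indicator (fun _ => (1:ℝ)) x) μ :=
      (integrable_const (1:ℝ)).indicator (hWmeas.inter hZ)
    have i2 : Integrable (fun x => (-m) * W.indicator (fun _ => (1:ℝ)) x) μ :=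
      ((integrable_const (1:ℝ)).indicator hWmeas).const_mul _
    have i3 : Integrable (fun x => (-m) * g x) μ := hgint.const_mul _
    have i4 : Integrable (fun _ : X => m * m) μ := integrable_const _
    have i34 : Integrable (fun x => (-m) * g x + m * m) μ := i3.add i4
    have i234 : Integrable
        (fun x => (-m) * W.indicator (fun _ => (1:ℝ)) x + ((-m) * g x + m * m)) μ := i2.add i34
    rw [integral_add i1 i234, integral_add i2 i34, integral_add i3 i4,
      integral_const_mul, integral_const_mul, hgI,
      integral_indicator_const (1:ℝ) (hWmeas.inter hZ), integral_indicator_const (1:ℝ) hWmeas,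
      integral_const]
    simp [Measure.real, hWm]
    ring
  have hGmeas : Measurable G := by
    have : G = fun ω => (μ ((fun x => a ω x) ⁻¹' Z ∩ Z)).toReal - m ^ 2 := funext hGform
    rw [this]
    exact (meas_inter hj hZ).ennreal_toReal.sub measurable_const
  have hGbd : ∀ ω, ‖G ω‖ ≤ 1 + m ^ 2 := by
    intro ω
    rw [hGform ω, Real.norm_eq_abs, abs_le]
    have h0 : (0:ℝ) ≤ (μ ((fun x => a ω x) ⁻¹' Z ∩ Z)).toReal := ENNReal.toReal_nonneg
    have h1 : (μ ((fun x => a ω x) ⁻¹' Z ∩ Z)).toReal ≤ 1 := by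
      simpa using ENNReal.toReal_mono ENNReal.one_ne_top prob_le_one
    constructor <;> nlinarith
  have hGint : ∀ (ν : Measure Ω), IsProbabilityMeasure ν → Integrable G ν := fun ν hν =>
    ⟨hGmeas.aestronglyMeasurable,
      HasFiniteIntegral.of_bounded (C := 1 + m ^ 2) (Filter.Eventually.of_forall hGbd)⟩
  have hGP₁ : ∫ ω, G ω ∂P₁ = m - m ^ 2 := by
    have hae := (isInvariant_iff_ae ha hj hZ).mp hinv
    have hGae : ∀ᵐ ω ∂P₁, G ω = m - m ^ 2 := by
      filter_upwards [hae] with ω h0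
      rw [boundary_eq ha hZ ω] at h0
      have hle : μ ((fun x => a ω x) ⁻¹' Z ∩ Z) ≤ μ Z := by
        calc μ ((fun x => a ω x) ⁻¹' Z ∩ Z) ≤ μ ((fun x => a ω x) ⁻¹' Z) :=
              measure_mono Set.inter_subset_left
          _ = μ Z := (ha ω).measure_preimage hZ.nullMeasurableSet
      have hge : μ Z ≤ μ ((fun x => a ω x) ⁻¹' Z ∩ Z) := tsub_eq_zero_iff_le.mp h0
      rw [hGform ω, le_antisymm hle hge]
    rw [integral_congr_ae hGae, integral_const]
    simp
  have hGP₂ : -(m ^ 2) ≤ ∫ ω, G ω ∂P₂ := by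
    have := integral_mono (μ := P₂) (integrable_const (-(m ^ 2))) (hGint P₂ inferInstance)
      (fun ω => by
        rw [hGform ω]
        have h0 : (0:ℝ) ≤ (μ ((fun x => a ω x) ⁻¹' Z ∩ Z)).toReal := ENNReal.toReal_nonneg
        linarith)
    rwa [integral_const, probReal_univ, one_smul] at this
  have hGP : ∫ ω, G ω ∂P = κ * (m - m ^ 2) + (1 - κ) * ∫ ω, G ω ∂P₂ := by
    rw [hdec,
      integral_add_measure ((hGint P₁ inferInstance).smul_measure ENNReal.ofReal_ne_top)
        ((hGint P₂ inferInstance).smul_measure ENNReal.ofReal_ne_top),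
      integral_smul_measure, integral_smul_measure, ENNReal.toReal_ofReal hκ0,
      ENNReal.toReal_ofReal (by linarith : (0:ℝ) ≤ 1 - κ), hGP₁]
    simp [smul_eq_mul]
  -- membership in the spectral set and conclusion
  have hrS : (∫ ω, G ω ∂P) / (∫ x, f x ^ 2 ∂μ) ∈ { r : ℝ | ∃ f : X → ℝ, MemLp f 2 μ ∧
      (∫ x, f x ∂μ) = 0 ∧ (∫ x, f x ^ 2 ∂μ) ≠ 0 ∧
      r = (∫ ω, (∫ x, f ((a ω) x) * f x ∂μ) ∂P) / (∫ x, f x ^ 2 ∂μ) } :=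
    ⟨f, hfmem, hf0, by rw [hQval]; exact ne_of_gt hQpos, rfl⟩
  have hrle : (∫ ω, G ω ∂P) / (∫ x, f x ^ 2 ∂μ) ≤ ρ :=
    le_csSup (bddAbove_spectrum ha) hrS
  rw [hQval, div_le_iff₀ hQpos, hGP] at hrle
  rw [div_le_iff₀ h1ρ]
  nlinarith [hGP₂, hm0, hQpos, mul_le_mul_of_nonneg_left hGP₂ (by linarith : (0:ℝ) ≤ 1 - κ)]
end
theorem ergodic_decomposition {X Ω : Type*} [MeasurableSpace X]
    [MeasurableSpace Ω] (μ : Measure X) (P P₁ P₂ : Measure Ω) (a : Ω → X ≃ᵐ X)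
    [IsProbabilityMeasure μ] [IsProbabilityMeasure P]
    [IsProbabilityMeasure P₁] [IsProbabilityMeasure P₂]
    (ha : ∀ ω, MeasurePreserving (a ω) μ μ)
    (hj : Measurable fun p : Ω × X => (a p.1) p.2)
    (κ : ℝ) (hκ1 : κ ≤ 1)
    (hρ : rhoPlus μ P a < κ)
    (hdec : P = ENNReal.ofReal κ • P₁ + ENNReal.ofReal (1 - κ) • P₂) :
    ∃ n : ℕ, 0 < n ∧
      (n : ℝ) ≤ (1 - rhoPlus μ P a) / (κ - rhoPlus μ P a) ∧
      ∃ Xs : Fin n → Set X,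
        (∀ i, MeasurableSet (Xs i)) ∧
        (∀ i, 0 < μ (Xs i)) ∧
        (∀ i, IsErgodicSet μ P₁ a (Xs i)) ∧
        Pairwise (Function.onFun Disjoint Xs) ∧
        (⋃ i, Xs i) = Set.univ := by
  classical
  have hκ0 : 0 ≤ κ := kappa_nonneg hdec
  set ρ := rhoPlus μ P a with hρdef
  have h1ρ : 0 < 1 - ρ := by linarith
  have hκρ : 0 < κ - ρ := by linarith
  set c : ℝ := (κ - ρ) / (1 - ρ) with hcdef
  have hc0 : 0 < c := div_pos hκρ h1ρ
  set Part : ℕ → Prop := fun k => ∃ Xs : Fin k → Set X,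
    (∀ i, MeasurableSet (Xs i)) ∧ (∀ i, μ (Xs i) ≠ 0) ∧
    (∀ i, IsInvariantSet μ P₁ a (Xs i)) ∧ Pairwise (Function.onFun Disjoint Xs) ∧
    (⋃ i, Xs i) = Set.univ with hPartdef
  have hreal : ∀ k, Part k → (k : ℝ) ≤ (1 - ρ) / (κ - ρ) := by
    rintro k ⟨Xs, hmeas, hpos, hinv, hdisj, huniv⟩
    have hsum : ∑ i : Fin k, μ (Xs i) = 1 := by
      calc ∑ i : Fin k, μ (Xs i) = ∑' i : Fin k, μ (Xs i) := (tsum_fintype _).symm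
        _ = μ (⋃ i, Xs i) := (measure_iUnion hdisj hmeas).symm
        _ = 1 := by rw [huniv, measure_univ]
    have hge : ∀ i : Fin k, ENNReal.ofReal c ≤ μ (Xs i) := fun i =>
      invariant_measure_ge ha hj hκ1 hρ hdec (hmeas i) (hinv i) (hpos i)
    have hkey : (k : ℝ≥0∞) * ENNReal.ofReal c ≤ 1 := by
      calc (k : ℝ≥0∞) * ENNReal.ofReal c = ∑ _i : Fin k, ENNReal.ofReal c := by
            rw [Finset.sum_const, Finset.card_univ, Fintype.card_fin, nsmul_eq_mul]
        _ ≤ ∑ i : Fin k, μ (Xs i) := Finset.sum_le_sum fun i _ => hge i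
        _ = 1 := hsum
    rw [← ENNReal.ofReal_natCast k, ← ENNReal.ofReal_mul (by positivity)] at hkey
    have hkc : (k : ℝ) * c ≤ 1 := ENNReal.ofReal_le_one.mp hkey
    have : (k : ℝ) ≤ 1 / c := by
      rw [le_div_iff₀ hc0]; exact hkc
    calc (k : ℝ) ≤ 1 / c := this
      _ = (1 - ρ) / (κ - ρ) := by rw [hcdef, one_div_div]
  set N₀ : ℕ := ⌈(1 - ρ) / (κ - ρ)⌉₊ with hN₀def
  have hN : ∀ k, Part k → k ≤ N₀ := fun k hk => by
    have h := (hreal k hk).trans (Nat.le_ceil _)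
    exact_mod_cast h
  have hP1 : Part 1 := ⟨fun _ => Set.univ, fun _ => MeasurableSet.univ,
    fun _ => by simp, fun _ => invariant_univ, Subsingleton.pairwise, Set.iUnion_const _⟩
  set n : ℕ := Nat.findGreatest Part N₀ with hndef
  have hn1 : 1 ≤ n := Nat.le_findGreatest (hN 1 hP1) hP1
  have hPn : Part n := Nat.findGreatest_spec (hN 1 hP1) hP1
  obtain ⟨Xs, hmeas, hpos, hinv, hdisj, huniv⟩ := hPn
  have hPn' : Part n := ⟨Xs, hmeas, hpos, hinv, hdisj, huniv⟩
  have herg : ∀ i, IsErgodicSet μ P₁ a (Xs i) := by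
    intro i
    refine ⟨hinv i, fun Z hZsub hZmeas hZinv => ?_⟩
    by_contra hcon
    push_neg at hcon
    obtain ⟨hZ0, hZd0⟩ := hcon
    set U : Fin n → Set X := Function.update Xs i Z with hUdef
    set L : Set X := Xs i \ Z with hLdef
    have hUd : ∀ j', Disjoint (U j') L := by
      intro j'
      by_cases hji : j' = i
      · rw [hji, hUdef, Function.update_self]
        exact disjoint_sdiff_self_right
      · rw [hUdef, Function.update_of_ne hji]
        exact (hdisj hji).mono_right Set.diff_subset
    have hUU : ∀ j' k', j' ≠ k' → Disjoint (U j') (U k') := by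
      intro j' k' hjk
      by_cases hji : j' = i
      · subst hji
        rw [hUdef, Function.update_self, Function.update_of_ne (Ne.symm hjk)]
        exact ((hdisj hjk).mono_left hZsub)
      · by_cases hki : k' = i
        · subst hki
          rw [hUdef, Function.update_self, Function.update_of_ne hji]
          exact ((hdisj hji).mono_right hZsub)
        · rw [hUdef, Function.update_of_ne hji, Function.update_of_ne hki]
          exact hdisj hjk
    have hPn1 : Part (n + 1) := by
      refine ⟨Fin.snoc U L, ?_, ?_, ?_, ?_, ?_⟩
      · intro j
        rcases Fin.eq_castSucc_or_eq_last j with ⟨j', rfl⟩ | rfl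
        · rw [Fin.snoc_castSucc]
          by_cases hji : j' = i
          · rw [hUdef, hji, Function.update_self]; exact hZmeas
          · rw [hUdef, Function.update_of_ne hji]; exact hmeas j'
        · rw [Fin.snoc_last, hLdef]; exact (hmeas i).diff hZmeas
      · intro j
        rcases Fin.eq_castSucc_or_eq_last j with ⟨j', rfl⟩ | rfl
        · rw [Fin.snoc_castSucc]
          by_cases hji : j' = i
          · rw [hUdef, hji, Function.update_self]; exact hZ0
          · rw [hUdef, Function.update_of_ne hji]; exact hpos j'
        · rw [Fin.snoc_last, hLdef]; exact hZd0
      · intro j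
        rcases Fin.eq_castSucc_or_eq_last j with ⟨j', rfl⟩ | rfl
        · rw [Fin.snoc_castSucc]
          by_cases hji : j' = i
          · rw [hUdef, hji, Function.update_self]; exact hZinv
          · rw [hUdef, Function.update_of_ne hji]; exact hinv j'
        · rw [Fin.snoc_last, hLdef]
          exact invariant_diff ha hj (hmeas i) hZmeas (hinv i) hZinv
      · intro j k hjk
        rcases Fin.eq_castSucc_or_eq_last j with ⟨j', rfl⟩ | rfl <;>
          rcases Fin.eq_castSucc_or_eq_last k with ⟨k', rfl⟩ | rfl
        · have hne : j' ≠ k' := fun h => hjk (by rw [h])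
          simpa [Function.onFun, Fin.snoc_castSucc] using hUU j' k' hne
        · simpa [Function.onFun, Fin.snoc_castSucc, Fin.snoc_last] using hUd j'
        · simpa [Function.onFun, Fin.snoc_castSucc, Fin.snoc_last] using (hUd k').symm
        · exact absurd rfl hjk
      · apply Set.eq_univ_iff_forall.mpr
        intro x
        have hx : x ∈ ⋃ i, Xs i := by rw [huniv]; exact Set.mem_univ x
        obtain ⟨j, hjx⟩ := Set.mem_iUnion.mp hx
        by_cases hji : j = i
        · subst hji
          by_cases hxZ : x ∈ Z
          · exact Set.mem_iUnion.mpr ⟨Fin.castSucc j,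
              by rw [Fin.snoc_castSucc, hUdef, Function.update_self]; exact hxZ⟩
          · exact Set.mem_iUnion.mpr ⟨Fin.last n,
              by rw [Fin.snoc_last, hLdef]; exact ⟨hjx, hxZ⟩⟩
        · exact Set.mem_iUnion.mpr ⟨Fin.castSucc j,
            by rw [Fin.snoc_castSucc, hUdef, Function.update_of_ne hji]; exact hjx⟩
    have := Nat.le_findGreatest (hN (n + 1) hPn1) hPn1
    omega
  exact ⟨n, hn1, hreal n hPn', Xs, hmeas,
    fun i => pos_iff_ne_zero.mpr (hpos i), herg, hdisj, huniv⟩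
end
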